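/- arXiv:1902.00872 — 7 statements merged into one kernel-verified Lean document; each statement's English description precedes it below -/
import Mathlib

section
/- Let ρ = Σ_{k≥1} a_k ρ_k be a probability measure on the unit circle, where a_k ≥ 0 with Σ a_k = 1, and each ρ_k is a probability measure invariant under rotation by 2π/2^k. Then for every n, e_{2^n}(ρ)² ≥ Σ_{k≥n+1} a_k. -/
open MeasureTheory Complex Polynomial
open scoped ENNReal

/-- The squared Szegő minimum `e_n(ρ)²`. -/
noncomputable def szegoE2 (ρ : Measure ℂ) (n : ℕ) : ℝ :=
  sInf { x | ∃ q : Polynomial ℂ, q.Monic ∧ q.natDegree = n ∧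
    x = ∫ z, ‖q.eval z‖ ^ 2 ∂ρ }


lemma dft_coeff {m D : ℕ} (hD : D < m) {ω : ℂ} (hω : IsPrimitiveRoot ω m)
    (q : Polynomial ℂ) (hq : q.natDegree = D) (z : ℂ) :
    ∑ j ∈ Finset.range m, (((ω ^ j) ^ D)⁻¹) * q.eval (ω ^ j * z)
      = (m : ℂ) * q.coeff D * z ^ D := by
  have hm0 : m ≠ 0 := by omega
  have hω0 : ω ≠ 0 := by
    intro h
    have := hω.pow_eq_one
    rw [h, zero_pow hm0] at this
    exact zero_ne_one this
  have step : ∀ j ∈ Finset.range m, ((ω ^ j) ^ D)⁻¹ * q.eval (ω ^ j * z)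
      = ∑ i ∈ Finset.range (D + 1), (q.coeff i * z ^ i) * (((ω ^ (D - i))⁻¹) ^ j) := by
    intro j _
    rw [Polynomial.eval_eq_sum_range, hq, Finset.mul_sum]
    refine Finset.sum_congr rfl fun i hi => ?_
    have hiD : i ≤ D := Nat.lt_succ_iff.mp (Finset.mem_range.mp hi)
    have hωj : (ω ^ j : ℂ) ≠ 0 := pow_ne_zero _ hω0
    have h2 : (ω ^ (D - i)) ^ j = (ω ^ j) ^ (D - i) := pow_right_comm ω _ _
    have h1' : (ω ^ j) ^ (D - i) * (ω ^ j) ^ i = (ω ^ j) ^ D := by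
      rw [← pow_add]; congr 1; omega
    have key : ((ω ^ j) ^ D)⁻¹ * (ω ^ j) ^ i = ((ω ^ (D - i)) ^ j)⁻¹ := by
      rw [h2, ← h1', mul_inv, mul_assoc, inv_mul_cancel₀ (pow_ne_zero i hωj), mul_one]
    calc ((ω ^ j) ^ D)⁻¹ * (q.coeff i * (ω ^ j * z) ^ i)
        = (((ω ^ j) ^ D)⁻¹ * (ω ^ j) ^ i) * (q.coeff i * z ^ i) := by rw [mul_pow]; ring
      _ = (q.coeff i * z ^ i) * (((ω ^ (D - i))⁻¹) ^ j) := by rw [key, inv_pow]; ring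
  rw [Finset.sum_congr rfl step, Finset.sum_comm]
  have inner : ∀ i ∈ Finset.range (D + 1),
      ∑ j ∈ Finset.range m, (q.coeff i * z ^ i) * (((ω ^ (D - i))⁻¹) ^ j)
        = (q.coeff i * z ^ i) * (if i = D then (m : ℂ) else 0) := by
    intro i hi
    rw [← Finset.mul_sum]
    congr 1
    by_cases hiD : i = D
    · subst hiD
      simp [Finset.sum_const]
    · have hiD' : i < D := lt_of_le_of_ne (Nat.lt_succ_iff.mp (Finset.mem_range.mp hi)) hiD
      have hpos : 0 < D - i := Nat.sub_pos_of_lt hiD'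
      have hlt : D - i < m := lt_of_le_of_lt (Nat.sub_le _ _) hD
      have hne1 : ((ω ^ (D - i))⁻¹ : ℂ) ≠ 1 := by
        simpa [inv_eq_one] using hω.pow_ne_one_of_pos_of_lt hpos.ne' hlt
      have hp : ((ω ^ (D - i)) : ℂ) ^ m = 1 := by
        rw [← pow_mul, mul_comm, pow_mul, hω.pow_eq_one, one_pow]
      have hpow1 : (((ω ^ (D - i))⁻¹ : ℂ)) ^ m = 1 := by
        rw [inv_pow, hp, inv_one]
      rw [geom_sum_eq hne1, hpow1, sub_self, zero_div, if_neg hiD]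
  rw [Finset.sum_congr rfl inner]
  simp [Finset.sum_ite_eq']
  ring

lemma pointwise_bound {m D : ℕ} (hD : D < m) {ω : ℂ} (hω : IsPrimitiveRoot ω m)
    {q : Polynomial ℂ} (hmon : q.Monic) (hq : q.natDegree = D) {z : ℂ} (hz : ‖z‖ = 1) :
    (m : ℝ) ≤ ∑ j ∈ Finset.range m, ‖q.eval (ω ^ j * z)‖ ^ 2 := by
  have hm0 : m ≠ 0 := by omega
  have hωn : ‖ω‖ = 1 := Complex.norm_eq_one_of_pow_eq_one hω.pow_eq_one hm0
  have hcoeff : q.coeff D = 1 := by rw [← hq]; exact hmon.coeff_natDegree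
  have h1 : (m : ℝ) = ‖∑ j ∈ Finset.range m, (((ω ^ j) ^ D)⁻¹) * q.eval (ω ^ j * z)‖ := by
    rw [dft_coeff hD hω q hq z, hcoeff]
    simp [norm_pow, hz]
  have h2 : (m : ℝ) ≤ ∑ j ∈ Finset.range m, ‖q.eval (ω ^ j * z)‖ := by
    rw [h1]
    refine le_trans (norm_sum_le _ _) (le_of_eq ?_)
    refine Finset.sum_congr rfl fun j _ => ?_
    rw [norm_mul, norm_inv, norm_pow, norm_pow, hωn, one_pow, one_pow, inv_one, one_mul]
  have h3 : ((m : ℝ)) ^ 2 ≤ (∑ j ∈ Finset.range m, ‖q.eval (ω ^ j * z)‖) ^ 2 := by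
    apply pow_le_pow_left₀ (by positivity) h2
  have h4 : (∑ j ∈ Finset.range m, ‖q.eval (ω ^ j * z)‖) ^ 2
      ≤ (m : ℝ) * ∑ j ∈ Finset.range m, ‖q.eval (ω ^ j * z)‖ ^ 2 := by
    simpa using sq_sum_le_card_mul_sum_sq (s := Finset.range m)
      (f := fun j => ‖q.eval (ω ^ j * z)‖)
  have hmpos : (0 : ℝ) < m := by positivity
  nlinarith [h3, h4]

lemma lintegral_ge_one {μ : Measure ℂ} [IsProbabilityMeasure μ] {m D : ℕ} (hD : D < m)
    {ω : ℂ} (hω : IsPrimitiveRoot ω m) (hsupp : μ (Metric.sphere (0 : ℂ) 1)ᶜ = 0)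
    (hinv : Measure.map (fun z => ω * z) μ = μ)
    {q : Polynomial ℂ} (hmon : q.Monic) (hq : q.natDegree = D) :
    1 ≤ ∫⁻ z, ENNReal.ofReal (‖q.eval z‖ ^ 2) ∂μ := by
  have hm0 : m ≠ 0 := by omega
  set f : ℂ → ℝ≥0∞ := fun z => ENNReal.ofReal (‖q.eval z‖ ^ 2) with hf_def
  have hf : Measurable f := by
    apply ENNReal.measurable_ofReal.comp
    exact ((q.continuous_aeval.norm.pow 2)).measurable
  have hmap : ∀ j : ℕ, Measure.map (fun z => ω ^ j * z) μ = μ := by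
    intro j
    induction j with
    | zero => simp [Measure.map_id]
    | succ j ih =>
      have hcomp : (fun z : ℂ => ω ^ (j + 1) * z)
          = (fun z : ℂ => ω * z) ∘ (fun z : ℂ => ω ^ j * z) := by
        funext z; simp [pow_succ]; ring
      rw [hcomp, ← Measure.map_map (measurable_const_mul ω) (measurable_const_mul (ω ^ j)),
        ih, hinv]
  have hint : ∀ j : ℕ, ∫⁻ z, f (ω ^ j * z) ∂μ = ∫⁻ z, f z ∂μ := by
    intro j
    conv_rhs => rw [← hmap j]
    rw [lintegral_map hf (measurable_const_mul _)]
  have hsum : (m : ℝ≥0∞) * ∫⁻ z, f z ∂μ = ∫⁻ z, ∑ j ∈ Finset.range m, f (ω ^ j * z) ∂μ := by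
    rw [lintegral_finset_sum (Finset.range m) (f := fun j z => f (ω ^ j * z))
      (fun j _ => hf.comp (measurable_const_mul _))]
    simp only [hint]
    rw [Finset.sum_const, Finset.card_range, nsmul_eq_mul]
  have hae : ∀ᵐ z ∂μ, z ∈ Metric.sphere (0 : ℂ) 1 := by
    rw [MeasureTheory.ae_iff]
    exact hsupp
  have hlow : ∀ᵐ z ∂μ, (m : ℝ≥0∞) ≤ ∑ j ∈ Finset.range m, f (ω ^ j * z) := by
    filter_upwards [hae] with z hz
    have hz1 : ‖z‖ = 1 := by
      simpa [Complex.dist_eq] using hz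
    have hpb := pointwise_bound hD hω hmon hq hz1
    calc (m : ℝ≥0∞) = ENNReal.ofReal (m : ℝ) := by simp
      _ ≤ ENNReal.ofReal (∑ j ∈ Finset.range m, ‖q.eval (ω ^ j * z)‖ ^ 2) :=
          ENNReal.ofReal_le_ofReal hpb
      _ = ∑ j ∈ Finset.range m, f (ω ^ j * z) := by
          rw [ENNReal.ofReal_sum_of_nonneg fun j _ => by positivity]
  have hfin : (m : ℝ≥0∞) * 1 ≤ (m : ℝ≥0∞) * ∫⁻ z, f z ∂μ := by
    rw [hsum, mul_one]
    calc (m : ℝ≥0∞) = ∫⁻ _, (m : ℝ≥0∞) ∂μ := by simp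
      _ ≤ _ := lintegral_mono_ae hlow
  have hmne : (m : ℝ≥0∞) ≠ 0 := by exact_mod_cast hm0
  have hmtop : (m : ℝ≥0∞) ≠ ⊤ := ENNReal.natCast_ne_top m
  exact (ENNReal.mul_le_mul_iff_right hmne hmtop).mp hfin

/-- If `ρ = Σ_{k≥1} a_k ρ_k` with `a_k ≥ 0`, `Σ a_k = 1`, and each `ρ_k` a probability
measure on the unit circle invariant under rotation by `2π/2^k`, then
`e_{2^n}(ρ)² ≥ Σ_{k≥n+1} a_k`.  (Index `k+1` plays the role of `k ≥ 1`.) -/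
theorem stmt1 (a : ℕ → ℝ) (ha : ∀ k, 0 ≤ a (k + 1))
    (hsum : ∑' k : ℕ, a (k + 1) = 1)
    (ρk : ℕ → Measure ℂ) (hprob : ∀ k, IsProbabilityMeasure (ρk (k + 1)))
    (hsupp : ∀ k, ρk (k + 1) (Metric.sphere (0 : ℂ) 1)ᶜ = 0)
    (hinv : ∀ k, Measure.map
      (fun z => Complex.exp (2 * Real.pi * Complex.I / (2 ^ (k + 1) : ℕ)) * z)
        (ρk (k + 1)) = ρk (k + 1))
    (n : ℕ) :
    (∑' j : ℕ, a (n + 1 + j)) ≤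
      szegoE2 (Measure.sum fun k : ℕ =>
        ENNReal.ofReal (a (k + 1)) • ρk (k + 1)) (2 ^ n) := by
  have hsummable : Summable (fun k => a (k + 1)) := by
    by_contra h
    rw [tsum_eq_zero_of_not_summable h] at hsum
    norm_num at hsum
  set ρ := Measure.sum (fun k : ℕ => ENNReal.ofReal (a (k + 1)) • ρk (k + 1)) with hρ
  rw [szegoE2]
  apply le_csInf
  · exact ⟨∫ z, ‖(X ^ (2 ^ n) : Polynomial ℂ).eval z‖ ^ 2 ∂ρ, X ^ (2 ^ n),
      monic_X_pow _, natDegree_X_pow _, rfl⟩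
  rintro x ⟨q, hqm, hqd, rfl⟩
  have hint_eq : ∫ z, ‖q.eval z‖ ^ 2 ∂ρ
      = (∫⁻ z, ENNReal.ofReal (‖q.eval z‖ ^ 2) ∂ρ).toReal := by
    rw [integral_eq_lintegral_of_nonneg_ae]
    · exact Filter.Eventually.of_forall fun z => by positivity
    · exact ((q.continuous_aeval.norm.pow 2)).aestronglyMeasurable
  set L : ℝ≥0∞ := ∫⁻ z, ENNReal.ofReal (‖q.eval z‖ ^ 2) ∂ρ with hLdef
  have hL : L = ∑' k : ℕ, ENNReal.ofReal (a (k + 1)) *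
      ∫⁻ z, ENNReal.ofReal (‖q.eval z‖ ^ 2) ∂(ρk (k + 1)) := by
    rw [hLdef, hρ, lintegral_sum_measure]
    exact tsum_congr fun k => lintegral_smul_measure _ _
  set C : ℝ := (∑ i ∈ Finset.range (2 ^ n + 1), ‖q.coeff i‖) ^ 2 with hCdef
  have hC : ∀ k : ℕ, (∫⁻ z, ENNReal.ofReal (‖q.eval z‖ ^ 2) ∂(ρk (k + 1)))
      ≤ ENNReal.ofReal C := by
    intro k
    haveI := hprob k
    have hae : ∀ᵐ z ∂(ρk (k + 1)), z ∈ Metric.sphere (0 : ℂ) 1 := by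
      rw [MeasureTheory.ae_iff]; exact hsupp k
    calc ∫⁻ z, ENNReal.ofReal (‖q.eval z‖ ^ 2) ∂(ρk (k + 1))
        ≤ ∫⁻ _, ENNReal.ofReal C ∂(ρk (k + 1)) := by
          apply lintegral_mono_ae
          filter_upwards [hae] with z hz
          apply ENNReal.ofReal_le_ofReal
          have hz1 : ‖z‖ = 1 := by simpa [Complex.dist_eq] using hz
          have hb : ‖q.eval z‖ ≤ ∑ i ∈ Finset.range (2 ^ n + 1), ‖q.coeff i‖ := by
            rw [Polynomial.eval_eq_sum_range, hqd]
            refine le_trans (norm_sum_le _ _) (le_of_eq (Finset.sum_congr rfl fun i _ => ?_))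
            rw [norm_mul, norm_pow, hz1, one_pow, mul_one]
          exact pow_le_pow_left₀ (norm_nonneg _) hb 2
      _ = ENNReal.ofReal C := by simp
  have hlow : ∀ k : ℕ, n ≤ k →
      (1 : ℝ≥0∞) ≤ ∫⁻ z, ENNReal.ofReal (‖q.eval z‖ ^ 2) ∂(ρk (k + 1)) := by
    intro k hk
    haveI := hprob k
    have hDlt : 2 ^ n < 2 ^ (k + 1) := Nat.pow_lt_pow_right one_lt_two (by omega)
    exact lintegral_ge_one hDlt
      (Complex.isPrimitiveRoot_exp (2 ^ (k + 1)) (by positivity))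
      (hsupp k) (hinv k) hqm hqd
  have htsum_a : ∑' k : ℕ, ENNReal.ofReal (a (k + 1)) = 1 := by
    rw [← ENNReal.ofReal_tsum_of_nonneg ha hsummable, hsum, ENNReal.ofReal_one]
  have hLfin : L ≠ ⊤ := by
    rw [hL]
    have h1 : ∑' k : ℕ, ENNReal.ofReal (a (k + 1)) *
        (∫⁻ z, ENNReal.ofReal (‖q.eval z‖ ^ 2) ∂(ρk (k + 1)))
        ≤ ∑' k : ℕ, ENNReal.ofReal (a (k + 1)) * ENNReal.ofReal C :=
      ENNReal.tsum_le_tsum fun k => mul_le_mul_right (hC k) _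
    have h2 : ∑' k : ℕ, ENNReal.ofReal (a (k + 1)) * ENNReal.ofReal C
        = ENNReal.ofReal C := by
      rw [ENNReal.tsum_mul_right, htsum_a, one_mul]
    exact ne_top_of_le_ne_top ENNReal.ofReal_ne_top (h1.trans h2.le)
  have hLlow : ∑' j : ℕ, ENNReal.ofReal (a (n + 1 + j)) ≤ L := by
    rw [hL]
    calc ∑' j : ℕ, ENNReal.ofReal (a (n + 1 + j))
        ≤ ∑' j : ℕ, ENNReal.ofReal (a ((n + j) + 1)) *
            ∫⁻ z, ENNReal.ofReal (‖q.eval z‖ ^ 2) ∂(ρk ((n + j) + 1)) := by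
          refine ENNReal.tsum_le_tsum fun j => ?_
          have h1 : ENNReal.ofReal (a (n + 1 + j)) = ENNReal.ofReal (a ((n + j) + 1)) * 1 := by
            rw [mul_one]
            congr 2
            omega
          rw [h1]
          exact mul_le_mul_right (hlow (n + j) (by omega)) _
      _ ≤ _ := ENNReal.tsum_comp_le_tsum_of_injective
          (f := fun j : ℕ => n + j) (add_right_injective n) _
  have hsumtail : Summable (fun j => a (n + 1 + j)) := by
    have heq : (fun j => a (n + 1 + j)) = fun j => (fun k => a (k + 1)) (j + n) := by
      funext j; congr 1; omega
    rw [heq]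
    exact (summable_nat_add_iff n).2 hsummable
  have htail_nonneg : 0 ≤ ∑' j : ℕ, a (n + 1 + j) :=
    tsum_nonneg fun j => by rw [show n + 1 + j = (n + j) + 1 by omega]; exact ha _
  have hofreal : ENNReal.ofReal (∑' j : ℕ, a (n + 1 + j))
      = ∑' j : ℕ, ENNReal.ofReal (a (n + 1 + j)) :=
    ENNReal.ofReal_tsum_of_nonneg (fun j => by rw [show n + 1 + j = (n + j) + 1 by omega]; exact ha _) hsumtail
  rw [hint_eq]
  calc ∑' j : ℕ, a (n + 1 + j)
      = (ENNReal.ofReal (∑' j : ℕ, a (n + 1 + j))).toReal :=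
        (ENNReal.toReal_ofReal htail_nonneg).symm
    _ ≤ L.toReal := ENNReal.toReal_mono hLfin (hofreal ▸ hLlow)
end

section
/- Let Λ_{2^k} = {λ ∈ ℂ : λ^{2^k} = 1}, let (a_k)_{k≥0} be nonnegative with Σ a_k = 1, let ρ_k = 2^{-k} Σ_{λ ∈ Λ_{2^{k+1}} \ Λ_{2^k}} δ_λ, and ρ = Σ_{k≥0} a_k ρ_k. Then for every n, e_{2^n}(ρ)² ≤ 4 Σ_{k≥n} a_k. -/
set_option maxHeartbeats 1000000


open MeasureTheory Complex Polynomial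

/-- `ρ_k = 2^{-k} Σ_{λ ∈ Λ_{2^{k+1}} \ Λ_{2^k}} δ_λ`; the elements of
`Λ_{2^{k+1}} \ Λ_{2^k}` are `exp(2πi(2j+1)/2^{k+1})`, `0 ≤ j < 2^k`. -/
noncomputable def rhoDyadic (k : ℕ) : Measure ℂ :=
  ((2 : ENNReal) ^ k)⁻¹ • Measure.sum (fun j : Fin (2 ^ k) =>
    Measure.dirac (Complex.exp (2 * Real.pi * Complex.I *
      (2 * (j : ℕ) + 1) / (2 ^ (k + 1) : ℕ))))

/-- The point of `rhoDyadic k`. -/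
noncomputable def dyadicPt (k j : ℕ) : ℂ :=
  Complex.exp (2 * Real.pi * Complex.I * (2 * (j : ℕ) + 1) / (2 ^ (k + 1) : ℕ))

lemma dyadicPt_norm (k j : ℕ) : ‖dyadicPt k j‖ = 1 := by
  have : (2 * Real.pi * Complex.I * (2 * (j : ℕ) + 1) / (2 ^ (k + 1) : ℕ)) =
      ((2 * Real.pi * (2 * (j : ℕ) + 1) / (2 ^ (k + 1) : ℕ) : ℝ) : ℂ) * Complex.I := by
    push_cast
    ring
  rw [dyadicPt, this, Complex.norm_exp_ofReal_mul_I]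

lemma dyadicPt_pow (k j n : ℕ) (hk : k < n) : (dyadicPt k j) ^ (2 ^ n) = 1 := by
  rw [dyadicPt, ← Complex.exp_nat_mul]
  have hkn : k + 1 ≤ n := hk
  have h2 : ((2 : ℂ) ^ (k + 1)) ≠ 0 := pow_ne_zero _ two_ne_zero
  have harg : (2 ^ n : ℕ) * (2 * Real.pi * Complex.I * (2 * (j : ℕ) + 1) / (2 ^ (k + 1) : ℕ))
      = ((2 ^ (n - (k + 1)) * (2 * j + 1) : ℕ) : ℂ) * (2 * Real.pi * Complex.I) := by
    have hn : n = (k + 1) + (n - (k + 1)) := by omega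
    rw [hn]
    simp only [Nat.add_sub_cancel_left]
    push_cast
    rw [pow_add]
    field_simp
  rw [harg]
  simpa using Complex.exp_int_mul_two_pi_mul_I ((2 ^ (n - (k + 1)) * (2 * j + 1) : ℕ) : ℤ)

lemma dyadicPt_bound (k j m : ℕ) : ‖(dyadicPt k j) ^ m - 1‖ ^ 2 ≤ 4 := by
  have h1 : ‖(dyadicPt k j) ^ m - 1‖ ≤ 2 := by
    calc ‖(dyadicPt k j) ^ m - 1‖ ≤ ‖(dyadicPt k j) ^ m‖ + ‖(1 : ℂ)‖ := norm_sub_le _ _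
    _ = 2 := by
        rw [norm_pow]
        simp [dyadicPt_norm]
        norm_num
  calc ‖(dyadicPt k j) ^ m - 1‖ ^ 2 ≤ 2 ^ 2 := by
        apply pow_le_pow_left₀ (norm_nonneg _) h1
  _ = 4 := by norm_num

theorem stmt2 (a : ℕ → ℝ) (ha : ∀ k, 0 ≤ a k) (hsum : ∑' k : ℕ, a k = 1)
    (n : ℕ) :
    szegoE2 (Measure.sum fun k : ℕ => ENNReal.ofReal (a k) • rhoDyadic k) (2 ^ n)
      ≤ 4 * ∑' k : ℕ, a (n + k) := by
  have hasummable : Summable a := by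
    by_contra h
    rw [tsum_eq_zero_of_not_summable h] at hsum
    norm_num at hsum
  set ρ : Measure ℂ := Measure.sum fun k : ℕ => ENNReal.ofReal (a k) • rhoDyadic k with hρ
  set Q : Polynomial ℂ := X ^ (2 ^ n) - C 1 with hQ
  have hQmonic : Q.Monic := monic_X_pow_sub_C 1 (Nat.two_pow_pos n).ne'
  have hQdeg : Q.natDegree = 2 ^ n := natDegree_X_pow_sub_C
  have hQeval : ∀ z : ℂ, Q.eval z = z ^ (2 ^ n) - 1 := by
    intro z; simp [hQ]
  -- the integral of |Q|² against ρ
  have key : ∫ z, ‖Q.eval z‖ ^ 2 ∂ρ ≤ 4 * ∑' k : ℕ, a (n + k) := by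
    have hnn : 0 ≤ᵐ[ρ] fun z => ‖Q.eval z‖ ^ 2 := by
      filter_upwards with z using by positivity
    have hmeas : AEStronglyMeasurable (fun z => ‖Q.eval z‖ ^ 2) ρ := by
      apply Continuous.aestronglyMeasurable
      continuity
    rw [integral_eq_lintegral_of_nonneg_ae hnn hmeas]
    have htail_nonneg : 0 ≤ 4 * ∑' k : ℕ, a (n + k) := by
      have : 0 ≤ ∑' k : ℕ, a (n + k) := tsum_nonneg (fun k => ha (n + k))
      linarith
    apply ENNReal.toReal_le_of_le_ofReal htail_nonneg
    -- compute the lintegral over each rhoDyadic k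
    have hrk : ∀ k : ℕ, ∫⁻ z, ENNReal.ofReal (‖Q.eval z‖ ^ 2) ∂(rhoDyadic k)
        = ((2 : ENNReal) ^ k)⁻¹ * ∑ j : Fin (2 ^ k),
            ENNReal.ofReal (‖Q.eval (dyadicPt k (j : ℕ))‖ ^ 2) := by
      intro k
      rw [rhoDyadic, lintegral_smul_measure, lintegral_sum_measure]
      congr 1
      rw [tsum_fintype]
      exact Finset.sum_congr rfl fun j _ => lintegral_dirac _ _
    have hrk_lt : ∀ k : ℕ, k < n →
        ∫⁻ z, ENNReal.ofReal (‖Q.eval z‖ ^ 2) ∂(rhoDyadic k) = 0 := by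
      intro k hk
      rw [hrk k]
      have : ∀ j : Fin (2 ^ k), ENNReal.ofReal (‖Q.eval (dyadicPt k (j : ℕ))‖ ^ 2) = 0 := by
        intro j
        rw [hQeval, dyadicPt_pow k j n hk]
        simp
      simp only [this, Finset.sum_const, smul_zero, mul_zero]
    have hrk_ge : ∀ k : ℕ,
        ∫⁻ z, ENNReal.ofReal (‖Q.eval z‖ ^ 2) ∂(rhoDyadic k) ≤ ENNReal.ofReal 4 := by
      intro k
      rw [hrk k]
      calc ((2 : ENNReal) ^ k)⁻¹ * ∑ j : Fin (2 ^ k),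
            ENNReal.ofReal (‖Q.eval (dyadicPt k (j : ℕ))‖ ^ 2)
          ≤ ((2 : ENNReal) ^ k)⁻¹ * ∑ _j : Fin (2 ^ k), ENNReal.ofReal 4 := by
            gcongr with j
            rw [hQeval]
            exact dyadicPt_bound k j (2 ^ n)
        _ = ((2 : ENNReal) ^ k)⁻¹ * ((2 ^ k : ℕ) * ENNReal.ofReal 4) := by
            rw [Finset.sum_const]; simp [Finset.card_univ, nsmul_eq_mul]
        _ = ENNReal.ofReal 4 := by
            rw [← mul_assoc]
            push_cast
            rw [ENNReal.inv_mul_cancel (by positivity) (by simp), one_mul]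
    rw [hρ, lintegral_sum_measure]
    have hterm : ∀ k : ℕ, ∫⁻ z, ENNReal.ofReal (‖Q.eval z‖ ^ 2)
        ∂(ENNReal.ofReal (a k) • rhoDyadic k)
        = ENNReal.ofReal (a k) * ∫⁻ z, ENNReal.ofReal (‖Q.eval z‖ ^ 2) ∂(rhoDyadic k) :=
      fun k => lintegral_smul_measure _ _
    have hgdef : ∀ k : ℕ, k < n → ENNReal.ofReal (a k) *
        ∫⁻ z, ENNReal.ofReal (‖Q.eval z‖ ^ 2) ∂(rhoDyadic k) = 0 := by
      intro k hk
      rw [hrk_lt k hk, mul_zero]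
    set g : ℕ → ENNReal := fun k => if k < n then 0
      else ENNReal.ofReal (a k) * ENNReal.ofReal 4 with hg
    have step1 : ∑' k : ℕ, ∫⁻ z, ENNReal.ofReal (‖Q.eval z‖ ^ 2)
        ∂(ENNReal.ofReal (a k) • rhoDyadic k) ≤ ∑' k : ℕ, g k := by
      apply ENNReal.tsum_le_tsum
      intro k
      rw [hterm k, hg]
      by_cases hk : k < n
      · rw [hgdef k hk]
        exact zero_le
      · simp only [hk, if_false]
        exact mul_le_mul_right (hrk_ge k) _
    have step2 : ∑' k : ℕ, g k = ∑' i : ℕ, g (i + n) := by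
      apply tsum_eq_tsum_of_ne_zero_bij (fun x => x.1 + n)
      · intro x y hxy
        exact Subtype.ext (by simpa using hxy)
      · intro k hk
        have hkn : n ≤ k := by
          by_contra h
          exact hk (by simp [hg, Nat.lt_of_not_le h])
        refine ⟨⟨k - n, ?_⟩, by simp; omega⟩
        simpa [Nat.sub_add_cancel hkn] using hk
      · intro x
        rfl
    have step3 : ∀ i : ℕ, g (i + n) = ENNReal.ofReal (a (n + i) * 4) := by
      intro i
      rw [hg]
      simp only
      rw [if_neg (by omega), Nat.add_comm i n, ENNReal.ofReal_mul (ha _)]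
    have hsummable' : Summable fun k => a (n + k) * 4 := by
      have h : Summable fun k => a (n + k) := by
        have := (summable_nat_add_iff n).mpr hasummable
        exact this.congr fun k => by rw [Nat.add_comm]
      exact h.mul_right 4
    have step4 : ∑' i : ℕ, g (i + n) = ENNReal.ofReal (4 * ∑' k : ℕ, a (n + k)) := by
      rw [tsum_congr step3,
        ← ENNReal.ofReal_tsum_of_nonneg (fun k => by have := ha (n + k); positivity) hsummable',
        tsum_mul_right, mul_comm]
    calc ∑' k : ℕ, ∫⁻ z, ENNReal.ofReal (‖Q.eval z‖ ^ 2)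
          ∂(ENNReal.ofReal (a k) • rhoDyadic k) ≤ ∑' k : ℕ, g k := step1
      _ = ∑' i : ℕ, g (i + n) := step2
      _ = ENNReal.ofReal (4 * ∑' k : ℕ, a (n + k)) := step4
  -- conclude via csInf
  refine le_trans (csInf_le ?_ ⟨Q, hQmonic, hQdeg, rfl⟩) key
  refine ⟨0, fun x hx => ?_⟩
  obtain ⟨q, _, _, rfl⟩ := hx
  exact integral_nonneg fun z => by positivity
end

section
/- Let Λ_{2^k} = {λ : λ^{2^k} = 1}, (a_k)_{k≥0} nonnegative with Σ a_k = 1, ρ_k = 2^{-k} Σ_{λ ∈ Λ_{2^{k+1}} \ Λ_{2^k}} δ_λ, and ρ = Σ_{k≥0} a_k ρ_k. Then Σ_{k≥n+1} a_k ≤ e_{2^n}(ρ)² ≤ 4 Σ_{k≥n} a_k for every n. -/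
open MeasureTheory Complex Polynomial

namespace Stmt3Aux

noncomputable def wpt (k j : ℕ) : ℂ :=
  Complex.exp (2 * Real.pi * Complex.I * (2 * (j : ℕ) + 1) / (2 ^ (k + 1) : ℕ))

lemma rhoDyadic_eq (k : ℕ) : rhoDyadic k = ((2 : ENNReal) ^ k)⁻¹ • Measure.sum
    (fun j : Fin (2 ^ k) => Measure.dirac (wpt k j)) := rfl

noncomputable def th (k j : ℕ) : ℝ := 2 * Real.pi * (2 * j + 1) / 2 ^ (k + 1)

lemma wpt_eq (k j : ℕ) : wpt k j = Complex.exp ((th k j : ℝ) * Complex.I) := by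
  unfold wpt th; congr 1; push_cast; ring

lemma norm_wpt (k j : ℕ) : ‖wpt k j‖ = 1 := by
  rw [wpt_eq]
  simp [Complex.norm_exp_ofReal_mul_I]

lemma conj_wpt (k j : ℕ) : (starRingEnd ℂ) (wpt k j) = Complex.exp (-(th k j : ℝ) * Complex.I) := by
  rw [wpt_eq, ← Complex.exp_conj, map_mul, Complex.conj_ofReal, Complex.conj_I]
  ring_nf

lemma wpt_pow (k j : ℕ) : wpt k j ^ (2 ^ (k + 1)) = 1 := by
  rw [wpt_eq, ← Complex.exp_nat_mul]
  have harg : ((2 ^ (k + 1) : ℕ) : ℂ) * (((th k j : ℝ) : ℂ) * Complex.I)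
      = ((2 * j + 1 : ℤ)) * (2 * Real.pi * Complex.I) := by
    unfold th
    have h2k : ((2 : ℝ) ^ (k + 1)) ≠ 0 := by positivity
    push_cast
    field_simp
  rw [harg, Complex.exp_int_mul_two_pi_mul_I]

lemma sum_conj_pow (k m : ℕ) (hm0 : 0 < m) (hm : m < 2 ^ k) :
    ∑ j : Fin (2 ^ k), (starRingEnd ℂ) (wpt k (j : ℕ)) ^ m = 0 := by
  have hB1 : Complex.exp ((-(2 * Real.pi * m / 2 ^ k) : ℝ) * Complex.I) ≠ 1 := by
    intro h
    rw [Complex.exp_eq_one_iff] at h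
    obtain ⟨z, hz⟩ := h
    have hz' : ((-(2 * Real.pi * m / 2 ^ k) : ℝ) : ℂ) * Complex.I
        = (((z : ℝ) * (2 * Real.pi) : ℝ) : ℂ) * Complex.I := by
      rw [hz]; push_cast; ring
    have h2 := mul_right_cancel₀ Complex.I_ne_zero hz'
    have h3 : (-(2 * Real.pi * m / 2 ^ k) : ℝ) = (z : ℝ) * (2 * Real.pi) :=
      Complex.ofReal_inj.mp h2
    have h2k : ((2 : ℝ) ^ k) ≠ 0 := by positivity
    have hpi2 : (2 * Real.pi) ≠ 0 := by positivity
    have h3' : -(2 * Real.pi * m) = (z : ℝ) * (2 * Real.pi) * 2 ^ k := by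
      field_simp at h3; linear_combination (2 * Real.pi) * h3
    have h4 : (2 * Real.pi) * (m : ℝ) = (2 * Real.pi) * ((-z : ℝ) * 2 ^ k) := by
      linear_combination -h3'
    have h5 : (m : ℝ) = (-z : ℝ) * 2 ^ k := mul_left_cancel₀ hpi2 h4
    have h5' : (m : ℝ) = ((2 ^ k * (-z) : ℤ) : ℝ) := by push_cast; linarith
    have h6 : (m : ℤ) = 2 ^ k * (-z) := by exact_mod_cast h5'
    have hdvd : ((2 : ℤ) ^ k) ∣ (m : ℤ) := ⟨-z, h6⟩
    have h7 := Int.le_of_dvd (by exact_mod_cast hm0) hdvd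
    have h8 : (m : ℤ) < 2 ^ k := by exact_mod_cast hm
    linarith
  have key : ∀ j : Fin (2 ^ k), (starRingEnd ℂ) (wpt k (j : ℕ)) ^ m
      = Complex.exp ((-(2 * Real.pi * m / 2 ^ (k+1)) : ℝ) * Complex.I) *
        (Complex.exp ((-(2 * Real.pi * m / 2 ^ k) : ℝ) * Complex.I)) ^ (j : ℕ) := by
    intro j
    rw [conj_wpt, ← Complex.exp_nat_mul, ← Complex.exp_nat_mul, ← Complex.exp_add]
    congr 1
    unfold th
    push_cast
    field_simp
    ring
  rw [Finset.sum_congr rfl (fun j _ => key j)]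
  rw [← Finset.mul_sum, Fin.sum_univ_eq_sum_range, geom_sum_eq hB1]
  have hBN : (Complex.exp ((-(2 * Real.pi * m / 2 ^ k) : ℝ) * Complex.I)) ^ (2 ^ k) = 1 := by
    rw [← Complex.exp_nat_mul]
    have harg : ((2 ^ k : ℕ) : ℂ) * (((-(2 * Real.pi * m / 2 ^ k) : ℝ) : ℂ) * Complex.I)
        = (-m : ℤ) * (2 * Real.pi * Complex.I) := by
      have h2k : ((2 : ℝ) ^ k) ≠ 0 := by positivity
      push_cast
      field_simp
    rw [harg, Complex.exp_int_mul_two_pi_mul_I]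
  rw [hBN]
  simp

lemma conj_mul_wpt (k j : ℕ) : (starRingEnd ℂ) (wpt k j) * wpt k j = 1 := by
  rw [mul_comm, Complex.mul_conj]
  norm_cast
  rw [← Complex.sq_norm, norm_wpt]
  norm_num

lemma sum_sq_ge (q : Polynomial ℂ) (hq : q.Monic) (k : ℕ) (hd : q.natDegree < 2 ^ k) :
    (2 ^ k : ℝ) ≤ ∑ j : Fin (2 ^ k), ‖q.eval (wpt k (j : ℕ))‖ ^ 2 := by
  set d := q.natDegree with hdd
  have hS : ∑ j : Fin (2 ^ k), (starRingEnd ℂ) (wpt k (j : ℕ)) ^ d * q.eval (wpt k (j : ℕ))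
      = (2 ^ k : ℂ) := by
    have heval : ∀ j : Fin (2 ^ k), q.eval (wpt k (j : ℕ))
        = ∑ i ∈ Finset.range (d + 1), q.coeff i * wpt k (j : ℕ) ^ i := fun j =>
      q.eval_eq_sum_range _
    calc ∑ j : Fin (2 ^ k), (starRingEnd ℂ) (wpt k (j : ℕ)) ^ d * q.eval (wpt k (j : ℕ))
        = ∑ j : Fin (2 ^ k), ∑ i ∈ Finset.range (d + 1),
            q.coeff i * ((starRingEnd ℂ) (wpt k (j : ℕ)) ^ (d - i)) := by
          refine Finset.sum_congr rfl fun j _ => ?_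
          rw [heval j, Finset.mul_sum]
          refine Finset.sum_congr rfl fun i hi => ?_
          rw [Finset.mem_range] at hi
          have hle : i ≤ d := Nat.lt_succ_iff.mp hi
          have hsplit : (starRingEnd ℂ) (wpt k (j : ℕ)) ^ d
              = (starRingEnd ℂ) (wpt k (j : ℕ)) ^ (d - i) *
                (starRingEnd ℂ) (wpt k (j : ℕ)) ^ i := by
            rw [← pow_add, Nat.sub_add_cancel hle]
          rw [hsplit]
          have hm1 : ((starRingEnd ℂ) (wpt k (j : ℕ)) * wpt k (j : ℕ)) ^ i = 1 := by
            rw [conj_mul_wpt]; simp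
          rw [mul_pow] at hm1
          calc (starRingEnd ℂ) (wpt k ↑j) ^ (d - i) * (starRingEnd ℂ) (wpt k ↑j) ^ i *
              (q.coeff i * wpt k ↑j ^ i)
              = q.coeff i * ((starRingEnd ℂ) (wpt k ↑j) ^ (d - i) *
                ((starRingEnd ℂ) (wpt k ↑j) ^ i * wpt k ↑j ^ i)) := by ring
            _ = q.coeff i * (starRingEnd ℂ) (wpt k ↑j) ^ (d - i) := by rw [hm1, mul_one]
      _ = ∑ i ∈ Finset.range (d + 1),
            q.coeff i * ∑ j : Fin (2 ^ k), (starRingEnd ℂ) (wpt k (j : ℕ)) ^ (d - i) := by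
          rw [Finset.sum_comm]
          exact Finset.sum_congr rfl fun i _ => by rw [Finset.mul_sum]
      _ = (2 ^ k : ℂ) := by
          rw [Finset.sum_eq_single d]
          · simp [hq.coeff_natDegree, ← hdd]
            exact hq.coeff_natDegree
          · intro i hi hne
            rw [Finset.mem_range] at hi
            have hle : i < d := lt_of_le_of_ne (Nat.lt_succ_iff.mp hi) hne
            rw [sum_conj_pow k (d - i) (by omega) (by omega), mul_zero]
          · intro h
            exact absurd (Finset.self_mem_range_succ d) h
  have h1 : (2 ^ k : ℝ) ≤ ∑ j : Fin (2 ^ k), ‖q.eval (wpt k (j : ℕ))‖ := by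
    calc (2 ^ k : ℝ) = ‖(2 ^ k : ℂ)‖ := by simp
      _ = ‖∑ j : Fin (2 ^ k), (starRingEnd ℂ) (wpt k (j : ℕ)) ^ d * q.eval (wpt k (j : ℕ))‖ := by
          rw [hS]
      _ ≤ ∑ j : Fin (2 ^ k), ‖(starRingEnd ℂ) (wpt k (j : ℕ)) ^ d * q.eval (wpt k (j : ℕ))‖ :=
          norm_sum_le _ _
      _ = ∑ j : Fin (2 ^ k), ‖q.eval (wpt k (j : ℕ))‖ := by
          refine Finset.sum_congr rfl fun j _ => ?_
          rw [norm_mul, norm_pow, RCLike.norm_conj, norm_wpt, one_pow, one_mul]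
  have h2 := Finset.sum_mul_sq_le_sq_mul_sq Finset.univ (fun _ : Fin (2 ^ k) => (1 : ℝ))
      (fun j => ‖q.eval (wpt k (j : ℕ))‖)
  simp only [one_pow, one_mul, Finset.sum_const, Finset.card_univ, Fintype.card_fin,
    nsmul_eq_mul, mul_one] at h2
  have hN : (0 : ℝ) < 2 ^ k := by positivity
  have hsq : ∀ j : Fin (2 ^ k), (0:ℝ) ≤ ‖q.eval (wpt k (j : ℕ))‖ := fun j => norm_nonneg _
  push_cast at h2 ⊢
  nlinarith [h1, h2, Finset.sum_nonneg fun j (_ : j ∈ Finset.univ) => hsq j]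

lemma my_integrable_dirac {f : ℂ → ℝ} (hf : Measurable f) (x : ℂ) :
    Integrable f (Measure.dirac x) := by
  refine ⟨hf.aestronglyMeasurable, ?_⟩
  rw [HasFiniteIntegral,
    lintegral_dirac' _ (f := fun a => ‖f a‖ₑ) (by fun_prop)]
  exact enorm_lt_top

lemma integral_rhoDyadic {f : ℂ → ℝ} (hf : Measurable f) (k : ℕ) :
    ∫ z, f z ∂(rhoDyadic k) = ((2 : ℝ) ^ k)⁻¹ * ∑ j : Fin (2 ^ k), f (wpt k (j : ℕ)) := by
  rw [rhoDyadic_eq, integral_smul_measure, Measure.sum_fintype,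
    integral_finset_sum_measure (fun j _ => my_integrable_dirac hf _)]
  simp only [integral_dirac, smul_eq_mul]
  congr 1
  rw [ENNReal.toReal_inv, ENNReal.toReal_pow, ENNReal.toReal_ofNat]

lemma lintegral_rhoDyadic {f : ℂ → ENNReal} (hf : Measurable f) (k : ℕ) :
    ∫⁻ z, f z ∂(rhoDyadic k) = ((2 : ENNReal) ^ k)⁻¹ * ∑ j : Fin (2 ^ k), f (wpt k (j : ℕ)) := by
  rw [rhoDyadic_eq, lintegral_smul_measure, lintegral_sum_measure]
  congr 1
  rw [tsum_fintype]
  exact Finset.sum_congr rfl fun j _ => lintegral_dirac' _ hf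

lemma eval_bound (q : Polynomial ℂ) {z : ℂ} (hz : ‖z‖ = 1) :
    ‖q.eval z‖ ≤ ∑ i ∈ Finset.range (q.natDegree + 1), ‖q.coeff i‖ := by
  rw [q.eval_eq_sum_range]
  refine (norm_sum_le _ _).trans ?_
  refine Finset.sum_le_sum fun i _ => ?_
  rw [norm_mul, norm_pow, hz, one_pow, mul_one]

lemma hasSum_main (a : ℕ → ℝ) (ha : ∀ k, 0 ≤ a k) (hsummable : Summable a) (q : Polynomial ℂ) :
    HasSum (fun k => a k * ∫ z, ‖q.eval z‖ ^ 2 ∂(rhoDyadic k))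
      (∫ z, ‖q.eval z‖ ^ 2 ∂(Measure.sum fun k : ℕ => ENNReal.ofReal (a k) • rhoDyadic k)) := by
  set f : ℂ → ℝ := fun z => ‖q.eval z‖ ^ 2 with hf
  have hcont : Continuous f := (q.continuous.norm).pow 2
  have hmeas : Measurable f := hcont.measurable
  set B : ℝ := ∑ i ∈ Finset.range (q.natDegree + 1), ‖q.coeff i‖ with hB
  have hInt : Integrable f (Measure.sum fun k : ℕ => ENNReal.ofReal (a k) • rhoDyadic k) := by
    refine ⟨hmeas.aestronglyMeasurable, ?_⟩
    rw [HasFiniteIntegral, lintegral_sum_measure]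
    have hterm : ∀ k : ℕ, ∫⁻ z, (‖f z‖₊ : ENNReal) ∂(ENNReal.ofReal (a k) • rhoDyadic k)
        ≤ ENNReal.ofReal (a k) * ENNReal.ofReal (B ^ 2) := by
      intro k
      rw [lintegral_smul_measure, lintegral_rhoDyadic (by fun_prop) k]
      refine mul_le_mul_right ?_ _
      have hptbd : ∀ j : ℕ, (‖f (wpt k j)‖₊ : ENNReal) ≤ ENNReal.ofReal (B ^ 2) := by
        intro j
        rw [hf]
        have h0 : (0:ℝ) ≤ ‖q.eval (wpt k j)‖ ^ 2 := by positivity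
        rw [show ((‖‖q.eval (wpt k j)‖ ^ 2‖₊ : ENNReal)) = ENNReal.ofReal (‖q.eval (wpt k j)‖ ^ 2)
          from (Real.enorm_eq_ofReal h0)]
        exact ENNReal.ofReal_le_ofReal (by
          have := eval_bound q (norm_wpt k j)
          have h1 : (0:ℝ) ≤ ‖q.eval (wpt k j)‖ := norm_nonneg _
          nlinarith)
      calc ((2 : ENNReal) ^ k)⁻¹ * ∑ j : Fin (2 ^ k), (‖f (wpt k (j : ℕ))‖₊ : ENNReal)
          ≤ ((2 : ENNReal) ^ k)⁻¹ * ∑ j : Fin (2 ^ k), ENNReal.ofReal (B ^ 2) :=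
            mul_le_mul_right (Finset.sum_le_sum fun j _ => hptbd _) _
        _ = ((2 : ENNReal) ^ k)⁻¹ * ((2 : ENNReal) ^ k * ENNReal.ofReal (B ^ 2)) := by
            rw [Finset.sum_const, Finset.card_univ, Fintype.card_fin, nsmul_eq_mul]
            norm_cast
        _ = ENNReal.ofReal (B ^ 2) := by
            rw [← mul_assoc, ENNReal.inv_mul_cancel (by positivity) (by
              exact ENNReal.pow_ne_top ENNReal.ofNat_ne_top), one_mul]
    refine lt_of_le_of_lt (ENNReal.tsum_le_tsum hterm) ?_
    rw [ENNReal.tsum_mul_right, ← ENNReal.ofReal_tsum_of_nonneg ha hsummable]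
    exact ENNReal.mul_lt_top ENNReal.ofReal_lt_top ENNReal.ofReal_lt_top
  have hhs := hasSum_integral_measure hInt
  have hfun : (fun k => a k * ∫ z, ‖q.eval z‖ ^ 2 ∂(rhoDyadic k))
      = fun i => ∫ x, f x ∂(ENNReal.ofReal (a i) • rhoDyadic i) := by
    funext k
    rw [integral_smul_measure, smul_eq_mul, ENNReal.toReal_ofReal (ha k)]
  rw [hfun]; exact hhs

end Stmt3Aux

open Stmt3Aux

theorem stmt3 (a : ℕ → ℝ) (ha : ∀ k, 0 ≤ a k) (hsum : ∑' k : ℕ, a k = 1)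
    (n : ℕ) :
    (∑' k : ℕ, a (n + 1 + k)) ≤
        szegoE2 (Measure.sum fun k : ℕ =>
          ENNReal.ofReal (a k) • rhoDyadic k) (2 ^ n) ∧
      szegoE2 (Measure.sum fun k : ℕ =>
          ENNReal.ofReal (a k) • rhoDyadic k) (2 ^ n)
        ≤ 4 * ∑' k : ℕ, a (n + k) := by
  have hsummable : Summable a := by
    by_contra h
    rw [tsum_eq_zero_of_not_summable h] at hsum
    norm_num at hsum
  set μ := Measure.sum fun k : ℕ => ENNReal.ofReal (a k) • rhoDyadic k with hμ
  have hIneg : ∀ (q : Polynomial ℂ) (k : ℕ), 0 ≤ ∫ z, ‖q.eval z‖ ^ 2 ∂(rhoDyadic k) :=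
    fun q k => integral_nonneg fun z => by positivity
  have hInonneg : ∀ (q : Polynomial ℂ), 0 ≤ ∫ z, ‖q.eval z‖ ^ 2 ∂μ :=
    fun q => integral_nonneg fun z => by positivity
  have hmeasq : ∀ q : Polynomial ℂ, Measurable fun z : ℂ => ‖q.eval z‖ ^ 2 :=
    fun q => ((q.continuous.norm).pow 2).measurable
  have hSne : { x | ∃ q : Polynomial ℂ, q.Monic ∧ q.natDegree = 2 ^ n ∧
      x = ∫ z, ‖q.eval z‖ ^ 2 ∂μ }.Nonempty :=
    ⟨_, X ^ (2 ^ n), monic_X_pow _, natDegree_X_pow _, rfl⟩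
  have hSbdd : BddBelow { x | ∃ q : Polynomial ℂ, q.Monic ∧ q.natDegree = 2 ^ n ∧
      x = ∫ z, ‖q.eval z‖ ^ 2 ∂μ } := by
    refine ⟨0, ?_⟩
    rintro x ⟨q, -, -, rfl⟩
    exact hInonneg q
  constructor
  · -- lower bound
    refine le_csInf hSne ?_
    rintro x ⟨q, hq, hdeg, rfl⟩
    have hHS := hasSum_main a ha hsummable q
    rw [← hμ] at hHS
    rw [← hHS.tsum_eq]
    refine (hsummable.comp_injective (add_right_injective (n + 1))).tsum_le_tsum_of_inj
      (fun k => n + 1 + k) (add_right_injective (n + 1))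
      (fun c _ => mul_nonneg (ha c) (hIneg q c)) (fun i => ?_) hHS.summable
    have hk : n + 1 ≤ n + 1 + i := by omega
    have hdlt : q.natDegree < 2 ^ (n + 1 + i) := by
      rw [hdeg]
      exact Nat.pow_lt_pow_right (by norm_num) (by omega)
    have hI1 : 1 ≤ ∫ z, ‖q.eval z‖ ^ 2 ∂(rhoDyadic (n + 1 + i)) := by
      rw [integral_rhoDyadic (hmeasq q)]
      have hge := sum_sq_ge q hq (n + 1 + i) hdlt
      have hpos : (0:ℝ) < 2 ^ (n + 1 + i) := by positivity
      calc (1:ℝ) = ((2:ℝ) ^ (n + 1 + i))⁻¹ * 2 ^ (n + 1 + i) := by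
            field_simp
        _ ≤ ((2:ℝ) ^ (n + 1 + i))⁻¹ * ∑ j : Fin (2 ^ (n + 1 + i)),
              ‖q.eval (wpt (n + 1 + i) (j : ℕ))‖ ^ 2 := by
            exact mul_le_mul_of_nonneg_left hge (by positivity)
    exact le_mul_of_one_le_right (ha _) hI1
  · -- upper bound
    set q0 : Polynomial ℂ := X ^ (2 ^ n) - C 1 with hq0
    have hq0monic : q0.Monic := monic_X_pow_sub_C 1 (by positivity)
    have hq0deg : q0.natDegree = 2 ^ n := natDegree_X_pow_sub_C
    have hHS := hasSum_main a ha hsummable q0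
    rw [← hμ] at hHS
    have hmem : (∫ z, ‖q0.eval z‖ ^ 2 ∂μ) ∈ { x | ∃ q : Polynomial ℂ, q.Monic ∧
        q.natDegree = 2 ^ n ∧ x = ∫ z, ‖q.eval z‖ ^ 2 ∂μ } :=
      ⟨q0, hq0monic, hq0deg, rfl⟩
    refine le_trans (csInf_le hSbdd hmem) ?_
    -- values of the integrals against rhoDyadic
    have hI0z : ∀ k, k < n → (∫ z, ‖q0.eval z‖ ^ 2 ∂(rhoDyadic k)) = 0 := by
      intro k hk
      rw [integral_rhoDyadic (hmeasq q0)]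
      have : ∀ j : Fin (2 ^ k), ‖q0.eval (wpt k (j : ℕ))‖ ^ 2 = 0 := by
        intro j
        have hpow : wpt k (j : ℕ) ^ (2 ^ n) = 1 := by
          have : (2 : ℕ) ^ n = 2 ^ (k + 1) * 2 ^ (n - (k + 1)) := by
            rw [← pow_add]
            congr 1
            omega
          rw [this, pow_mul, wpt_pow, one_pow]
        simp [hq0, hpow]
      rw [Finset.sum_congr rfl fun j _ => this j]
      simp
    have hI0le : ∀ k, (∫ z, ‖q0.eval z‖ ^ 2 ∂(rhoDyadic k)) ≤ 4 := by
      intro k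
      rw [integral_rhoDyadic (hmeasq q0)]
      have hterm : ∀ j : Fin (2 ^ k), ‖q0.eval (wpt k (j : ℕ))‖ ^ 2 ≤ 4 := by
        intro j
        have hnorm : ‖q0.eval (wpt k (j : ℕ))‖ ≤ 2 := by
          rw [hq0]
          simp only [eval_sub, eval_pow, eval_X, eval_C]
          refine (norm_sub_le _ _).trans ?_
          rw [norm_pow, norm_wpt, one_pow, norm_one]
          norm_num
        nlinarith [norm_nonneg (q0.eval (wpt k (j : ℕ)))]
      have hsum4 : ∑ j : Fin (2 ^ k), ‖q0.eval (wpt k (j : ℕ))‖ ^ 2 ≤ (2 ^ k : ℝ) * 4 := by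
        calc ∑ j : Fin (2 ^ k), ‖q0.eval (wpt k (j : ℕ))‖ ^ 2
            ≤ ∑ _j : Fin (2 ^ k), (4:ℝ) := Finset.sum_le_sum fun j _ => hterm j
          _ = (2 ^ k : ℝ) * 4 := by
              rw [Finset.sum_const, Finset.card_univ, Fintype.card_fin, nsmul_eq_mul]
              push_cast
              ring
      have hpos : (0:ℝ) < 2 ^ k := by positivity
      calc ((2:ℝ) ^ k)⁻¹ * ∑ j : Fin (2 ^ k), ‖q0.eval (wpt k (j : ℕ))‖ ^ 2
          ≤ ((2:ℝ) ^ k)⁻¹ * ((2 ^ k : ℝ) * 4) :=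
            mul_le_mul_of_nonneg_left hsum4 (by positivity)
        _ = 4 := by field_simp
    -- reindex and bound the tsum
    rw [← hHS.tsum_eq]
    have hinj : Function.Injective (fun k : ℕ => n + k) := add_right_injective n
    have hvanish : (Function.support fun c => a c * (∫ z, ‖q0.eval z‖ ^ 2 ∂(rhoDyadic c)))
        ⊆ Set.range (fun k : ℕ => n + k) := by
      intro c hc
      by_contra h
      apply hc
      have hcn : c < n := by
        by_contra h'
        exact h ⟨c - n, show n + (c - n) = c by omega⟩
      show a c * (∫ z, ‖q0.eval z‖ ^ 2 ∂(rhoDyadic c)) = 0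
      rw [hI0z c hcn, mul_zero]
    have hre : ∑' k, a k * (∫ z, ‖q0.eval z‖ ^ 2 ∂(rhoDyadic k))
        = ∑' k, a (n + k) * (∫ z, ‖q0.eval z‖ ^ 2 ∂(rhoDyadic (n + k))) :=
      (hinj.tsum_eq hvanish).symm
    rw [hre]
    have hle : ∀ k, a (n + k) * (∫ z, ‖q0.eval z‖ ^ 2 ∂(rhoDyadic (n + k))) ≤ 4 * a (n + k) := by
      intro k
      rw [mul_comm (4:ℝ)]
      exact mul_le_mul_of_nonneg_left (hI0le (n + k)) (ha (n + k))
    calc ∑' k, a (n + k) * (∫ z, ‖q0.eval z‖ ^ 2 ∂(rhoDyadic (n + k)))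
        ≤ ∑' k, 4 * a (n + k) := by
          refine Summable.tsum_le_tsum hle (hHS.summable.comp_injective hinj)
            ((hsummable.comp_injective hinj).mul_left 4)
      _ = 4 * ∑' k, a (n + k) := tsum_mul_left
end

section
/- Let a = (a_j)_{j≥1} be a nonincreasing sequence of positive numbers with Σ a_j = 1. Then the measure ρ = Σ_{k=1}^{n+1} (Σ_{j≥0} a_{k+j(n+1)}) δ_{e^{2πik/(n+1)}} satisfies e_n(ρ)² ≥ (n+1) Σ_{j≥1} a_{j(n+1)}. Consequently, sup over choices of atoms (λ_j) ⊂ 𝕋 of e_n(Σ_j a_j δ_{λ_j})² is at least (n+1) Σ_{j≥1} a_{j(n+1)}, and in particular at least (n+1) a_{n+1}. -/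
open MeasureTheory Complex Polynomial

section aux

open scoped ENNReal

/-- integral of a nonneg continuous function against a countable atomic measure -/
lemma integral_atoms {ι : Type*} [Countable ι] (c : ι → ℝ) (p : ι → ℂ) (f : ℂ → ℝ)
    (hf : Continuous f) (hf0 : ∀ z, 0 ≤ f z) :
    ∫ z, f z ∂(Measure.sum fun i => ENNReal.ofReal (c i) • Measure.dirac (p i)) =
      (∑' i, ENNReal.ofReal (c i) * ENNReal.ofReal (f (p i))).toReal := by
  rw [integral_eq_lintegral_of_nonneg_ae (Filter.Eventually.of_forall hf0)
    hf.aestronglyMeasurable, lintegral_sum_measure]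
  congr 1
  exact tsum_congr fun i => by
    rw [lintegral_smul_measure,
      lintegral_dirac' _ hf.measurable.ennreal_ofReal, smul_eq_mul]

end aux

section roots

variable (n : ℕ)

lemma omega_prim : IsPrimitiveRoot (Complex.exp (2 * Real.pi * Complex.I / (n + 1))) (n + 1) := by
  have h := Complex.isPrimitiveRoot_exp (n + 1) (Nat.succ_ne_zero n)
  rwa [Nat.cast_add, Nat.cast_one] at h

lemma omega_norm : ‖Complex.exp (2 * Real.pi * Complex.I / (n + 1))‖ = 1 := by
  have : (2 * Real.pi * Complex.I / (n + 1)) = ((2 * Real.pi / (n + 1) : ℝ) : ℂ) * Complex.I := by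
    push_cast
    ring
  rw [this, Complex.norm_exp_ofReal_mul_I]

/-- sum of m-th powers of the roots of unity vanishes unless (n+1) ∣ m -/
lemma root_pow_sum {m : ℕ} (hm1 : 1 ≤ m) (hm2 : m ≤ n) :
    ∑ k : Fin (n + 1), (Complex.exp (2 * Real.pi * Complex.I / (n + 1)) ^ ((k : ℕ) + 1)) ^ m
      = 0 := by
  set ω := Complex.exp (2 * Real.pi * Complex.I / (n + 1)) with hω
  have hprim := omega_prim n
  rw [← hω] at hprim
  have hx : (ω ^ m) ≠ 1 := fun h => by
    rw [hprim.pow_eq_one_iff_dvd] at h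
    exact absurd (Nat.le_of_dvd (by omega) h) (by omega)
  have hx1 : (ω ^ m) ^ (n + 1) = 1 := by
    rw [← pow_mul, mul_comm, pow_mul, hprim.pow_eq_one, one_pow]
  calc ∑ k : Fin (n + 1), (ω ^ ((k : ℕ) + 1)) ^ m
      = ∑ k : Fin (n + 1), (ω ^ m) ^ ((k : ℕ) + 1) := by
        apply Finset.sum_congr rfl
        intro k _
        rw [← pow_mul, ← pow_mul, mul_comm]
    _ = ∑ k ∈ Finset.range (n + 1), (ω ^ m) ^ (k + 1) :=
        Fin.sum_univ_eq_sum_range (fun k => (ω ^ m) ^ (k + 1)) (n + 1)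
    _ = (∑ k ∈ Finset.range (n + 1), (ω ^ m) ^ k) * (ω ^ m) := by
        rw [Finset.sum_mul]
        exact Finset.sum_congr rfl fun k _ => (pow_succ _ _)
    _ = 0 := by
        rw [geom_sum_eq hx, hx1]
        simp

lemma root_eval_sum {q : Polynomial ℂ} (hq : q.Monic) (hd : q.natDegree = n) :
    ∑ k : Fin (n + 1),
      (Complex.exp (2 * Real.pi * Complex.I / (n + 1)) ^ ((k : ℕ) + 1)) *
        q.eval (Complex.exp (2 * Real.pi * Complex.I / (n + 1)) ^ ((k : ℕ) + 1))
      = (n + 1 : ℂ) := by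
  set ω := Complex.exp (2 * Real.pi * Complex.I / (n + 1)) with hω
  have hprim := omega_prim n
  rw [← hω] at hprim
  have heval : ∀ k : Fin (n + 1),
      ω ^ ((k : ℕ) + 1) * q.eval (ω ^ ((k : ℕ) + 1)) =
        ∑ m ∈ Finset.range (n + 1), q.coeff m * (ω ^ ((k : ℕ) + 1)) ^ (m + 1) := by
    intro k
    rw [Polynomial.eval_eq_sum_range' (by omega : q.natDegree < n + 1), Finset.mul_sum]
    apply Finset.sum_congr rfl
    intro m _
    ring
  rw [Finset.sum_congr rfl fun k _ => heval k, Finset.sum_comm]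
  rw [Finset.sum_range_succ]
  have h1 : ∀ m ∈ Finset.range n,
      ∑ k : Fin (n + 1), q.coeff m * (ω ^ ((k : ℕ) + 1)) ^ (m + 1) = 0 := by
    intro m hm
    rw [Finset.mem_range] at hm
    rw [← Finset.mul_sum, root_pow_sum n (by omega) (by omega), mul_zero]
  rw [Finset.sum_congr rfl h1, Finset.sum_const_zero, zero_add]
  have h2 : ∀ k : Fin (n + 1), (ω ^ ((k : ℕ) + 1)) ^ (n + 1) = 1 := by
    intro k
    rw [← pow_mul, mul_comm, pow_mul, hprim.pow_eq_one, one_pow]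
  have h3 : q.coeff n = 1 := by
    have := hq
    rwa [Polynomial.Monic, Polynomial.leadingCoeff, hd] at this
  rw [Finset.sum_congr rfl fun k _ => by rw [h2 k, h3, mul_one]]
  simp [Finset.card_univ]

/-- the key spectral inequality -/
lemma root_sq_sum {q : Polynomial ℂ} (hq : q.Monic) (hd : q.natDegree = n) :
    (n + 1 : ℝ) ≤ ∑ k : Fin (n + 1),
      ‖q.eval (Complex.exp (2 * Real.pi * Complex.I / (n + 1)) ^ ((k : ℕ) + 1))‖ ^ 2 := by
  set ω := Complex.exp (2 * Real.pi * Complex.I / (n + 1)) with hω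
  set g : Fin (n + 1) → ℝ := fun k => ‖q.eval (ω ^ ((k : ℕ) + 1))‖ with hg
  have hnorm : ∀ k : Fin (n + 1), ‖ω ^ ((k : ℕ) + 1) * q.eval (ω ^ ((k : ℕ) + 1))‖ = g k := by
    intro k
    rw [norm_mul, norm_pow, omega_norm n, one_pow, one_mul]
  have h1 : (n + 1 : ℝ) ≤ ∑ k : Fin (n + 1), g k := by
    have := norm_sum_le Finset.univ
      (fun k : Fin (n + 1) => ω ^ ((k : ℕ) + 1) * q.eval (ω ^ ((k : ℕ) + 1)))
    rw [root_eval_sum n hq hd] at this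
    have hle : ‖(n + 1 : ℂ)‖ = (n + 1 : ℝ) := by
      rw [show ((n : ℂ) + 1) = ((n + 1 : ℝ) : ℂ) by push_cast; ring, Complex.norm_real,
        Real.norm_of_nonneg (by positivity)]
    rw [hle] at this
    calc (n + 1 : ℝ) ≤ ∑ k : Fin (n + 1), ‖ω ^ ((k : ℕ) + 1) * q.eval (ω ^ ((k : ℕ) + 1))‖ := this
      _ = ∑ k, g k := Finset.sum_congr rfl fun k _ => hnorm k
  have h2 : (∑ k : Fin (n + 1), g k) ^ 2 ≤ (n + 1 : ℝ) * ∑ k, g k ^ 2 := by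
    have := sq_sum_le_card_mul_sum_sq (s := (Finset.univ : Finset (Fin (n + 1)))) (f := g)
    simpa [Finset.card_univ] using this
  have hpos : (0 : ℝ) < n + 1 := by positivity
  nlinarith [Finset.sum_nonneg (fun k (_ : k ∈ Finset.univ) => sq_nonneg (g k))]

end roots

section rearrange

open scoped ENNReal

lemma measure_rearrange (a : ℕ → ℝ) (ha : ∀ j, 0 ≤ a (j + 1))
    (n : ℕ) (p : Fin (n + 1) → ℂ)
    (hsub : ∀ k : Fin (n + 1), Summable fun j => a ((k : ℕ) + 1 + j * (n + 1))) :
    (Measure.sum fun j : ℕ => ENNReal.ofReal (a (j + 1)) •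
        Measure.dirac (p ⟨j % (n + 1), Nat.mod_lt _ n.succ_pos⟩)) =
      Measure.sum fun k : Fin (n + 1) =>
        ENNReal.ofReal (∑' j : ℕ, a ((k : ℕ) + 1 + j * (n + 1))) • Measure.dirac (p k) := by
  ext s hs
  rw [Measure.sum_apply _ hs, Measure.sum_apply _ hs]
  simp only [Measure.smul_apply, smul_eq_mul, Measure.dirac_apply' _ hs]
  rw [← Equiv.tsum_eq (Nat.divModEquiv (n + 1)).symm, ENNReal.tsum_prod']
  rw [ENNReal.tsum_comm]
  apply tsum_congr
  intro k
  have hk : ∀ m : ℕ, (⟨(Nat.divModEquiv (n + 1)).symm (m, k) % (n + 1),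
      Nat.mod_lt _ n.succ_pos⟩ : Fin (n + 1)) = k := by
    intro m
    apply Fin.ext
    show ((n + 1).divModEquiv.symm (m, k) : ℕ) % (n + 1) = (k : ℕ)
    rw [Nat.divModEquiv_symm_apply]
    rw [mul_comm, Nat.mul_add_mod, Nat.mod_eq_of_lt k.is_lt]
  have hi : ∀ m : ℕ, ((Nat.divModEquiv (n + 1)).symm (m, k) : ℕ) + 1
      = (k : ℕ) + 1 + m * (n + 1) := by
    intro m
    simp [Nat.divModEquiv]
    ring
  calc ∑' m : ℕ, ENNReal.ofReal (a ((Nat.divModEquiv (n + 1)).symm (m, k) + 1)) *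
        s.indicator 1 (p ⟨(Nat.divModEquiv (n + 1)).symm (m, k) % (n + 1),
          Nat.mod_lt _ n.succ_pos⟩)
      = ∑' m : ℕ, ENNReal.ofReal (a ((k : ℕ) + 1 + m * (n + 1))) * s.indicator 1 (p k) := by
        exact tsum_congr fun m => by rw [hk m, hi m]
    _ = (∑' m : ℕ, ENNReal.ofReal (a ((k : ℕ) + 1 + m * (n + 1)))) * s.indicator 1 (p k) :=
        ENNReal.tsum_mul_right
    _ = ENNReal.ofReal (∑' m : ℕ, a ((k : ℕ) + 1 + m * (n + 1))) * s.indicator 1 (p k) := by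
        rw [ENNReal.ofReal_tsum_of_nonneg (fun m => by
          have : (k : ℕ) + 1 + m * (n + 1) = ((k : ℕ) + m * (n + 1)) + 1 := by ring
          rw [this]; exact ha _) (hsub k)]

end rearrange

lemma anti_aux (a : ℕ → ℝ) (hmono : ∀ j, a (j + 2) ≤ a (j + 1)) (m p : ℕ) :
    a (m + 1 + p) ≤ a (m + 1) := by
  induction p with
  | zero => simp
  | succ p ih =>
      have h := hmono (m + p)
      have e1 : m + 1 + (p + 1) = m + p + 2 := by omega
      have e2 : m + 1 + p = m + p + 1 := by omega
      rw [e1]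
      rw [e2] at ih
      exact le_trans h ih

/-- Part (i) of the theorem on discrete measures: for a nonincreasing positive
sequence `(a_j)_{j≥1}` of sum 1 (indexed here by `a (j+1)`), the measure
`ρ = Σ_{k=1}^{n+1} (Σ_{j≥0} a_{k+j(n+1)}) δ_{e^{2πik/(n+1)}}` satisfies
`e_n(ρ)² ≥ (n+1) Σ_{j≥1} a_{j(n+1)}`; consequently the sup of `e_n²` over
choices of atoms is at least `(n+1) Σ_{j≥1} a_{j(n+1)} ≥ (n+1) a_{n+1}`. -/
theorem stmt4 (a : ℕ → ℝ) (hpos : ∀ j, 0 < a (j + 1))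
    (hmono : ∀ j, a (j + 2) ≤ a (j + 1))
    (hsum : ∑' j : ℕ, a (j + 1) = 1) (n : ℕ) :
    (n + 1 : ℝ) * (∑' j : ℕ, a ((j + 1) * (n + 1))) ≤
        szegoE2 (Measure.sum fun k : Fin (n + 1) =>
          ENNReal.ofReal (∑' j : ℕ, a ((k : ℕ) + 1 + j * (n + 1))) •
            Measure.dirac (Complex.exp
              (2 * Real.pi * Complex.I * ((k : ℕ) + 1) / (n + 1)))) n ∧
      (n + 1 : ℝ) * (∑' j : ℕ, a ((j + 1) * (n + 1))) ≤
        sSup { x | ∃ l : ℕ → ℂ, (∀ j, l j ∈ Metric.sphere (0 : ℂ) 1) ∧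
          x = szegoE2 (Measure.sum fun j : ℕ =>
            ENNReal.ofReal (a (j + 1)) • Measure.dirac (l j)) n } ∧
      (n + 1 : ℝ) * a (n + 1) ≤
        sSup { x | ∃ l : ℕ → ℂ, (∀ j, l j ∈ Metric.sphere (0 : ℂ) 1) ∧
          x = szegoE2 (Measure.sum fun j : ℕ =>
            ENNReal.ofReal (a (j + 1)) • Measure.dirac (l j)) n } := by
  have hnn : ∀ j, 0 ≤ a (j + 1) := fun j => (hpos j).le
  have hA : Summable fun j => a (j + 1) := by
    by_contra h
    rw [tsum_eq_zero_of_not_summable h] at hsum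
    norm_num at hsum
  have hinj : ∀ k : ℕ, Function.Injective fun j : ℕ => k + j * (n + 1) := by
    intro k x y h
    simp only at h
    have h' : x * (n + 1) = y * (n + 1) := by omega
    exact Nat.eq_of_mul_eq_mul_right n.succ_pos h'
  have hsub : ∀ k : ℕ, Summable fun j : ℕ => a (k + 1 + j * (n + 1)) := by
    intro k
    have := hA.comp_injective (hinj k)
    refine this.congr fun j => ?_
    simp only [Function.comp_apply]
    congr 1
    ring
  have hSsum : Summable fun j : ℕ => a ((j + 1) * (n + 1)) := by
    have := hA.comp_injective (hinj n)
    refine this.congr fun j => ?_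
    simp only [Function.comp_apply]
    congr 1
    ring
  set S := ∑' j : ℕ, a ((j + 1) * (n + 1)) with hS
  have hS0 : 0 ≤ S := by
    refine tsum_nonneg fun j => ?_
    have e : (j + 1) * (n + 1) = (j * (n + 1) + n) + 1 := by ring
    rw [e]
    exact hnn _
  set ω := Complex.exp (2 * Real.pi * Complex.I / (n + 1)) with hω
  have hpω : ∀ k : Fin (n + 1),
      Complex.exp (2 * Real.pi * Complex.I * ((k : ℕ) + 1) / (n + 1)) = ω ^ ((k : ℕ) + 1) := by
    intro k
    rw [hω, ← Complex.exp_nat_mul]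
    congr 1
    push_cast
    ring
  have hc0 : ∀ k : Fin (n + 1), 0 ≤ ∑' j : ℕ, a ((k : ℕ) + 1 + j * (n + 1)) := by
    intro k
    refine tsum_nonneg fun j => ?_
    have e : (k : ℕ) + 1 + j * (n + 1) = ((k : ℕ) + j * (n + 1)) + 1 := by ring
    rw [e]
    exact hnn _
  have hcS : ∀ k : Fin (n + 1), S ≤ ∑' j : ℕ, a ((k : ℕ) + 1 + j * (n + 1)) := by
    intro k
    refine Summable.tsum_le_tsum (fun j => ?_) hSsum (hsub k)
    have e1 : (j + 1) * (n + 1) = ((k : ℕ) + 1 + j * (n + 1)) + (n - (k : ℕ)) := by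
      obtain ⟨d, hd⟩ := Nat.le.dest (Nat.lt_succ_iff.mp k.is_lt)
      have expand : (j + 1) * (n + 1) = j * (n + 1) + (n + 1) := by ring
      rw [expand]
      generalize j * (n + 1) = t
      omega
    have e2 : (k : ℕ) + 1 + j * (n + 1) = ((k : ℕ) + j * (n + 1)) + 1 := by ring
    rw [e1, e2]
    exact anti_aux a hmono _ _
  -- the main lower bound
  have hmain : (n + 1 : ℝ) * S ≤
      szegoE2 (Measure.sum fun k : Fin (n + 1) =>
        ENNReal.ofReal (∑' j : ℕ, a ((k : ℕ) + 1 + j * (n + 1))) •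
          Measure.dirac (Complex.exp
            (2 * Real.pi * Complex.I * ((k : ℕ) + 1) / (n + 1)))) n := by
    apply le_csInf
    · exact ⟨_, X ^ n, monic_X_pow n, natDegree_X_pow n, rfl⟩
    · rintro b ⟨q, hqm, hqd, rfl⟩
      have key : (∫ z, ‖q.eval z‖ ^ 2 ∂(Measure.sum fun k : Fin (n + 1) =>
            ENNReal.ofReal (∑' j : ℕ, a ((k : ℕ) + 1 + j * (n + 1))) •
              Measure.dirac (Complex.exp
                (2 * Real.pi * Complex.I * ((k : ℕ) + 1) / (n + 1)))))
          = (∑' k : Fin (n + 1), ENNReal.ofReal (∑' j : ℕ, a ((k : ℕ) + 1 + j * (n + 1))) *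
              ENNReal.ofReal (‖q.eval (Complex.exp
                (2 * Real.pi * Complex.I * ((k : ℕ) + 1) / (n + 1)))‖ ^ 2)).toReal :=
        integral_atoms _ _ (fun z => ‖q.eval z‖ ^ 2) (by continuity) (fun z => by positivity)
      rw [key, tsum_fintype]
      have e1 : ∀ k : Fin (n + 1),
          ENNReal.ofReal (∑' j : ℕ, a ((k : ℕ) + 1 + j * (n + 1))) *
              ENNReal.ofReal (‖q.eval (Complex.exp
                (2 * Real.pi * Complex.I * ((k : ℕ) + 1) / (n + 1)))‖ ^ 2)
            = ENNReal.ofReal ((∑' j : ℕ, a ((k : ℕ) + 1 + j * (n + 1))) *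
              ‖q.eval (Complex.exp
                (2 * Real.pi * Complex.I * ((k : ℕ) + 1) / (n + 1)))‖ ^ 2) :=
        fun k => (ENNReal.ofReal_mul (hc0 k)).symm
      rw [Finset.sum_congr rfl fun k _ => e1 k,
        ENNReal.toReal_sum fun k _ => ENNReal.ofReal_ne_top]
      have e2 : ∀ k : Fin (n + 1),
          (ENNReal.ofReal ((∑' j : ℕ, a ((k : ℕ) + 1 + j * (n + 1))) *
              ‖q.eval (Complex.exp
                (2 * Real.pi * Complex.I * ((k : ℕ) + 1) / (n + 1)))‖ ^ 2)).toReal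
            = (∑' j : ℕ, a ((k : ℕ) + 1 + j * (n + 1))) *
              ‖q.eval (ω ^ ((k : ℕ) + 1))‖ ^ 2 :=
        fun k => by rw [ENNReal.toReal_ofReal (mul_nonneg (hc0 k) (by positivity)), hpω k]
      rw [Finset.sum_congr rfl fun k _ => e2 k]
      calc (n + 1 : ℝ) * S = S * (n + 1) := by ring
        _ ≤ S * ∑ k : Fin (n + 1), ‖q.eval (ω ^ ((k : ℕ) + 1))‖ ^ 2 :=
            mul_le_mul_of_nonneg_left (root_sq_sum n hqm hqd) hS0
        _ = ∑ k : Fin (n + 1), S * ‖q.eval (ω ^ ((k : ℕ) + 1))‖ ^ 2 := Finset.mul_sum _ _ _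
        _ ≤ ∑ k : Fin (n + 1), (∑' j : ℕ, a ((k : ℕ) + 1 + j * (n + 1))) *
              ‖q.eval (ω ^ ((k : ℕ) + 1))‖ ^ 2 :=
            Finset.sum_le_sum fun k _ =>
              mul_le_mul_of_nonneg_right (hcS k) (by positivity)
  -- the set of szegoE2 values over choices of atoms
  have hT_bdd : BddAbove { x | ∃ l : ℕ → ℂ, (∀ j, l j ∈ Metric.sphere (0 : ℂ) 1) ∧
      x = szegoE2 (Measure.sum fun j : ℕ =>
        ENNReal.ofReal (a (j + 1)) • Measure.dirac (l j)) n } := by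
    refine ⟨1, ?_⟩
    rintro x ⟨l, hl, rfl⟩
    have hBB : BddBelow { y | ∃ q : Polynomial ℂ, q.Monic ∧ q.natDegree = n ∧
        y = ∫ z, ‖q.eval z‖ ^ 2 ∂(Measure.sum fun j : ℕ =>
          ENNReal.ofReal (a (j + 1)) • Measure.dirac (l j)) } := by
      refine ⟨0, ?_⟩
      rintro y ⟨q, _, _, rfl⟩
      exact integral_nonneg fun z => by positivity
    have key : (∫ z, ‖(X ^ n : Polynomial ℂ).eval z‖ ^ 2 ∂(Measure.sum fun j : ℕ =>
          ENNReal.ofReal (a (j + 1)) • Measure.dirac (l j)))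
        = (∑' j : ℕ, ENNReal.ofReal (a (j + 1)) *
            ENNReal.ofReal (‖(X ^ n : Polynomial ℂ).eval (l j)‖ ^ 2)).toReal :=
      integral_atoms _ _ (fun z => ‖(X ^ n : Polynomial ℂ).eval z‖ ^ 2)
        (by continuity) (fun z => by positivity)
    have hval : (∫ z, ‖(X ^ n : Polynomial ℂ).eval z‖ ^ 2 ∂(Measure.sum fun j : ℕ =>
        ENNReal.ofReal (a (j + 1)) • Measure.dirac (l j))) = 1 := by
      rw [key]
      have hj : ∀ j : ℕ, ENNReal.ofReal (‖(X ^ n : Polynomial ℂ).eval (l j)‖ ^ 2) = 1 := by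
        intro j
        rw [Polynomial.eval_pow, Polynomial.eval_X, norm_pow,
          mem_sphere_zero_iff_norm.mp (hl j), one_pow, one_pow, ENNReal.ofReal_one]
      have ht : (∑' j : ℕ, ENNReal.ofReal (a (j + 1)) *
          ENNReal.ofReal (‖(X ^ n : Polynomial ℂ).eval (l j)‖ ^ 2))
          = ∑' j : ℕ, ENNReal.ofReal (a (j + 1)) :=
        tsum_congr fun j => by rw [hj j, mul_one]
      rw [ht, ← ENNReal.ofReal_tsum_of_nonneg hnn hA, hsum, ENNReal.ofReal_one,
        ENNReal.toReal_one]
    calc szegoE2 (Measure.sum fun j : ℕ =>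
          ENNReal.ofReal (a (j + 1)) • Measure.dirac (l j)) n
        ≤ ∫ z, ‖(X ^ n : Polynomial ℂ).eval z‖ ^ 2 ∂(Measure.sum fun j : ℕ =>
            ENNReal.ofReal (a (j + 1)) • Measure.dirac (l j)) :=
          csInf_le hBB ⟨X ^ n, monic_X_pow n, natDegree_X_pow n, rfl⟩
      _ = 1 := hval
  have hT_mem : szegoE2 (Measure.sum fun k : Fin (n + 1) =>
        ENNReal.ofReal (∑' j : ℕ, a ((k : ℕ) + 1 + j * (n + 1))) •
          Measure.dirac (Complex.exp
            (2 * Real.pi * Complex.I * ((k : ℕ) + 1) / (n + 1)))) n ∈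
      { x | ∃ l : ℕ → ℂ, (∀ j, l j ∈ Metric.sphere (0 : ℂ) 1) ∧
        x = szegoE2 (Measure.sum fun j : ℕ =>
          ENNReal.ofReal (a (j + 1)) • Measure.dirac (l j)) n } := by
    refine ⟨fun j => (fun k : Fin (n + 1) => Complex.exp
        (2 * Real.pi * Complex.I * ((k : ℕ) + 1) / (n + 1)))
          ⟨j % (n + 1), Nat.mod_lt _ n.succ_pos⟩, fun j => ?_, ?_⟩
    · rw [mem_sphere_zero_iff_norm]
      beta_reduce
      have e : (2 * Real.pi * Complex.I *
            ((((⟨j % (n + 1), Nat.mod_lt _ n.succ_pos⟩ : Fin (n + 1)) : ℕ) : ℂ) + 1) / (n + 1))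
          = ((2 * Real.pi * ((j % (n + 1) : ℕ) + 1) / (n + 1) : ℝ) : ℂ) * Complex.I := by
        push_cast
        ring
      rw [e, Complex.norm_exp_ofReal_mul_I]
    · rw [measure_rearrange a hnn n (fun k : Fin (n + 1) => Complex.exp
        (2 * Real.pi * Complex.I * ((k : ℕ) + 1) / (n + 1))) (fun k => hsub k)]
  refine ⟨hmain, le_trans hmain (le_csSup hT_bdd hT_mem), ?_⟩
  have haS : a (n + 1) ≤ S := by
    have h0 := Summable.le_tsum hSsum 0 fun j _ => by
      have e : (j + 1) * (n + 1) = (j * (n + 1) + n) + 1 := by ring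
      rw [e]
      exact hnn _
    simpa using h0
  exact le_trans (mul_le_mul_of_nonneg_left haS (by positivity))
    (le_trans hmain (le_csSup hT_bdd hT_mem))
end

section
/- (Halász) For every positive integer d, there exists a polynomial H_d of degree at most d with complex coefficients such that H_d(0) = 1, H_d(1) = 0, and |H_d(z)| ≤ 1 + 2/d for all z on the unit circle. -/
open Polynomial

/-- The paraunitary lattice step: given an angle `t` and a pair of polynomials,
produce the rotated pair. -/
noncomputable def halStep (t : ℝ) (w : Polynomial ℂ × Polynomial ℂ) :
    Polynomial ℂ × Polynomial ℂ :=
  (C (Real.cos t : ℂ) * w.1 - C (Real.sin t : ℂ) * (X * w.2),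
   C (Real.sin t : ℂ) * w.1 + C (Real.cos t : ℂ) * (X * w.2))

/-- Iterates of the lattice step with constant angle, starting from `(cos t, sin t)`. -/
noncomputable def halW (t : ℝ) : ℕ → Polynomial ℂ × Polynomial ℂ
  | 0 => (C (Real.cos t : ℂ), C (Real.sin t : ℂ))
  | (j + 1) => halStep t (halW t j)

lemma hal_key_normSq (c s : ℝ) (h : s ^ 2 + c ^ 2 = 1) (a b z : ℂ)
    (hz : Complex.normSq z = 1) :
    Complex.normSq ((c : ℂ) * a - (s : ℂ) * (z * b)) +
      Complex.normSq ((s : ℂ) * a + (c : ℂ) * (z * b)) =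
      Complex.normSq a + Complex.normSq b := by
  have hw : Complex.normSq (z * b) = Complex.normSq b := by
    rw [Complex.normSq_mul, hz, one_mul]
  have key : Complex.normSq ((c : ℂ) * a - (s : ℂ) * (z * b)) +
      Complex.normSq ((s : ℂ) * a + (c : ℂ) * (z * b)) =
      (s ^ 2 + c ^ 2) * (Complex.normSq a + Complex.normSq (z * b)) := by
    simp only [Complex.normSq_apply, Complex.sub_re, Complex.sub_im, Complex.add_re,
      Complex.add_im, Complex.mul_re, Complex.mul_im, Complex.ofReal_re, Complex.ofReal_im]
    ring
  rw [key, h, one_mul, hw]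

lemma hal_cs (ca sa a b : ℝ) (ha : 0 ≤ a) (hb : 0 ≤ b) (h1 : sa ^ 2 + ca ^ 2 = 1)
    (h2 : a ^ 2 + b ^ 2 = 1) : |ca| * a + |sa| * b ≤ 1 := by
  have h3 : (|ca| * a + |sa| * b) ^ 2 ≤ 1 := by
    nlinarith [sq_nonneg (|ca| * b - |sa| * a), sq_abs ca, sq_abs sa,
      abs_nonneg ca, abs_nonneg sa]
  nlinarith [mul_nonneg (abs_nonneg ca) ha, mul_nonneg (abs_nonneg sa) hb]

lemma halW_natDegree (t : ℝ) : ∀ j, (halW t j).1.natDegree ≤ j ∧ (halW t j).2.natDegree ≤ j := by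
  intro j
  induction j with
  | zero => constructor <;> simp [halW]
  | succ j ih =>
    have hXv : (X * (halW t j).2).natDegree ≤ j + 1 := by
      refine le_trans natDegree_mul_le ?_
      have h2 := ih.2
      have hX : (X : Polynomial ℂ).natDegree ≤ 1 := natDegree_X_le
      omega
    constructor
    · refine le_trans (natDegree_sub_le _ _) (max_le ?_ ?_)
      · exact le_trans (natDegree_C_mul_le _ _) (le_trans ih.1 (Nat.le_succ j))
      · exact le_trans (natDegree_C_mul_le _ _) hXv
    · refine le_trans (natDegree_add_le _ _) (max_le ?_ ?_)
      · exact le_trans (natDegree_C_mul_le _ _) (le_trans ih.1 (Nat.le_succ j))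
      · exact le_trans (natDegree_C_mul_le _ _) hXv

lemma halW_eval0 (t : ℝ) : ∀ j, (halW t j).1.eval 0 = ((Real.cos t : ℂ)) ^ (j + 1) := by
  intro j
  induction j with
  | zero => simp [halW]
  | succ j ih =>
    simp only [halW, halStep, eval_sub, eval_mul, eval_C, eval_X, ih]
    ring

lemma halW_eval1 (t : ℝ) : ∀ j,
    (halW t j).1.eval 1 = ((Real.cos (((j : ℝ) + 1) * t) : ℝ) : ℂ) ∧
    (halW t j).2.eval 1 = ((Real.sin (((j : ℝ) + 1) * t) : ℝ) : ℂ) := by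
  intro j
  induction j with
  | zero => constructor <;> · simp [halW]
  | succ j ih =>
    have hc : Real.cos (((↑(j + 1) : ℝ) + 1) * t) =
        Real.cos t * Real.cos (((j : ℝ) + 1) * t) - Real.sin t * Real.sin (((j : ℝ) + 1) * t) := by
      rw [show ((↑(j + 1) : ℝ) + 1) * t = t + ((↑j : ℝ) + 1) * t by push_cast; ring,
        Real.cos_add]
    have hs : Real.sin (((↑(j + 1) : ℝ) + 1) * t) =
        Real.sin t * Real.cos (((j : ℝ) + 1) * t) + Real.cos t * Real.sin (((j : ℝ) + 1) * t) := by
      rw [show ((↑(j + 1) : ℝ) + 1) * t = t + ((↑j : ℝ) + 1) * t by push_cast; ring,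
        Real.sin_add]
    constructor
    · simp only [halW, halStep, eval_sub, eval_mul, eval_C, eval_X, ih.1, ih.2, one_mul, hc]
      push_cast
      ring
    · simp only [halW, halStep, eval_add, eval_mul, eval_C, eval_X, ih.1, ih.2, one_mul, hs]
      push_cast
      ring

lemma halW_normSq (t : ℝ) (z : ℂ) (hz : Complex.normSq z = 1) : ∀ j,
    Complex.normSq ((halW t j).1.eval z) + Complex.normSq ((halW t j).2.eval z) = 1 := by
  intro j
  induction j with
  | zero =>
    simp only [halW, eval_C, Complex.normSq_ofReal]
    nlinarith [Real.sin_sq_add_cos_sq t]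
  | succ j ih =>
    simp only [halW, halStep, eval_sub, eval_add, eval_mul, eval_C, eval_X]
    rw [hal_key_normSq (Real.cos t) (Real.sin t) (Real.sin_sq_add_cos_sq t) _ _ z hz]
    exact ih

/-- Halász's lemma: for every `d ≥ 1` there is a polynomial `H` of degree at most `d`
with `H(0) = 1`, `H(1) = 0`, and `|H| ≤ 1 + 2/d` on the unit circle. -/
theorem stmt6 (d : ℕ) (hd : 1 ≤ d) :
    ∃ H : Polynomial ℂ, H.natDegree ≤ d ∧ H.eval 0 = 1 ∧ H.eval 1 = 0 ∧
      ∀ z ∈ Metric.sphere (0 : ℂ) 1, ‖H.eval z‖ ≤ 1 + 2 / d := by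
  have hdR : (1 : ℝ) ≤ (d : ℝ) := by exact_mod_cast hd
  have hd0 : (0 : ℝ) < (d : ℝ) := by linarith
  set x : ℝ := Real.pi / (2 * ((d : ℝ) + 1)) with hxdef
  have hxpos : 0 < x := by
    apply div_pos Real.pi_pos
    linarith
  -- key inequality : d/(d+2) ≤ (cos x)^(d+1)
  have hdx : (d : ℝ) * x = Real.pi / 2 - x := by
    rw [hxdef]
    field_simp
    ring
  have hxle1 : x ≤ 1 := by
    rw [hxdef, div_le_one (by linarith)]
    have := Real.pi_le_four
    linarith
  have hx2 : x ^ 2 = Real.pi ^ 2 / (4 * ((d : ℝ) + 1) ^ 2) := by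
    rw [hxdef]
    field_simp
    ring
  have hKey : (d : ℝ) / ((d : ℝ) + 2) ≤ Real.cos x ^ (d + 1) := by
    have h0 : (0 : ℝ) ≤ 1 - x ^ 2 / 2 := by nlinarith
    have h1 : (1 - x ^ 2 / 2) ^ (d + 1) ≤ Real.cos x ^ (d + 1) :=
      pow_le_pow_left₀ h0 Real.one_sub_sq_div_two_le_cos _
    have h2 : 1 + ((d : ℝ) + 1) * (-(x ^ 2 / 2)) ≤ (1 + (-(x ^ 2 / 2))) ^ (d + 1) := by
      have hb := one_add_mul_le_pow (a := -(x ^ 2 / 2)) (by nlinarith) (d + 1)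
      have hcast : ((d + 1 : ℕ) : ℝ) = (d : ℝ) + 1 := by push_cast; ring
      rw [hcast] at hb
      exact hb
    have h3 : (d : ℝ) / ((d : ℝ) + 2) ≤ 1 + ((d : ℝ) + 1) * (-(x ^ 2 / 2)) := by
      have hpi : Real.pi < 3.15 := Real.pi_lt_d2
      have hpisq : Real.pi ^ 2 < 9.9225 := by nlinarith [Real.pi_pos]
      have expand : ((d : ℝ) + 1) * (x ^ 2 / 2) = Real.pi ^ 2 / (8 * ((d : ℝ) + 1)) := by
        rw [hx2]
        field_simp
        ring
      have h4 : Real.pi ^ 2 / (8 * ((d : ℝ) + 1)) ≤ 2 / ((d : ℝ) + 2) := by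
        rw [div_le_div_iff₀ (by linarith) (by linarith)]
        nlinarith
      have h5 : (d : ℝ) / ((d : ℝ) + 2) = 1 - 2 / ((d : ℝ) + 2) := by
        field_simp
        ring
      rw [h5]
      have h6 : ((d : ℝ) + 1) * (-(x ^ 2 / 2)) = -(((d : ℝ) + 1) * (x ^ 2 / 2)) := by ring
      rw [h6, expand]
      linarith
    calc (d : ℝ) / ((d : ℝ) + 2) ≤ 1 + ((d : ℝ) + 1) * (-(x ^ 2 / 2)) := h3
      _ ≤ (1 + (-(x ^ 2 / 2))) ^ (d + 1) := h2
      _ = (1 - x ^ 2 / 2) ^ (d + 1) := by ring_nf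
      _ ≤ Real.cos x ^ (d + 1) := h1
  -- IVT to find t₀ with sin(d t₀) cos(t₀)^d = d/(d+2)
  have hcont : ContinuousOn (fun t => Real.sin ((d : ℝ) * t) * Real.cos t ^ d)
      (Set.Icc 0 x) := by
    apply Continuous.continuousOn
    exact (Real.continuous_sin.comp (continuous_const.mul continuous_id)).mul
      (Real.continuous_cos.pow d)
  have hfx : Real.sin ((d : ℝ) * x) * Real.cos x ^ d = Real.cos x ^ (d + 1) := by
    rw [hdx, Real.sin_pi_div_two_sub]
    ring
  have hmem : (d : ℝ) / ((d : ℝ) + 2) ∈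
      Set.Icc (Real.sin ((d : ℝ) * 0) * Real.cos 0 ^ d)
        (Real.sin ((d : ℝ) * x) * Real.cos x ^ d) := by
    constructor
    · simp only [mul_zero, Real.sin_zero, zero_mul]
      positivity
    · rw [hfx]; exact hKey
  obtain ⟨t₀, -, hft₀⟩ := intermediate_value_Icc (le_of_lt hxpos) hcont hmem
  simp only at hft₀
  -- construct the polynomial
  set β : ℝ := Real.pi / 2 - (d : ℝ) * t₀ with hβdef
  obtain ⟨n, rfl⟩ : ∃ n, d = n + 1 := ⟨d - 1, by omega⟩
  have hncast : ((n : ℝ) + 1) = ((n + 1 : ℕ) : ℝ) := by push_cast; ring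
  set u : Polynomial ℂ := (halW t₀ n).1 with hudef
  set v : Polynomial ℂ := (halW t₀ n).2 with hvdef
  set p : Polynomial ℂ := C (Real.cos β : ℂ) * u - C (Real.sin β : ℂ) * (X * v) with hpdef
  set K : ℝ := 1 + 2 / ((n + 1 : ℕ) : ℝ) with hKdef
  have hKpos : 0 < K := by
    rw [hKdef]
    have : (0 : ℝ) < ((n + 1 : ℕ) : ℝ) := by positivity
    positivity
  refine ⟨C (K : ℂ) * p, ?_, ?_, ?_, ?_⟩
  · -- degree
    have hXv : (X * v).natDegree ≤ n + 1 := by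
      refine le_trans natDegree_mul_le ?_
      have h2 := (halW_natDegree t₀ n).2
      have hX : (X : Polynomial ℂ).natDegree ≤ 1 := natDegree_X_le
      rw [hvdef]
      omega
    have hdeg : p.natDegree ≤ n + 1 := by
      rw [hpdef]
      refine le_trans (natDegree_sub_le _ _) (max_le ?_ ?_)
      · exact le_trans (natDegree_C_mul_le _ _)
          (le_trans (halW_natDegree t₀ n).1 (Nat.le_succ n))
      · exact le_trans (natDegree_C_mul_le _ _) hXv
    exact le_trans (natDegree_C_mul_le _ _) hdeg
  · -- eval 0
    have hu0 : u.eval 0 = ((Real.cos t₀ : ℂ)) ^ (n + 1) := halW_eval0 t₀ n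
    have hcβ : Real.cos β = Real.sin (((n + 1 : ℕ) : ℝ) * t₀) := by
      rw [hβdef, Real.cos_pi_div_two_sub]
    have hreal : K * (Real.cos β * Real.cos t₀ ^ (n + 1)) = 1 := by
      rw [hcβ, hft₀, hKdef]
      rw [← hncast]
      field_simp
    rw [hpdef]
    simp only [eval_mul, eval_sub, eval_C, eval_X, eval_zero, zero_mul, mul_zero, sub_zero]
    rw [hu0]
    rw [show ((Real.cos t₀ : ℝ) : ℂ) ^ (n + 1) = ((Real.cos t₀ ^ (n + 1) : ℝ) : ℂ) by
      push_cast; ring]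
    rw [show ((K : ℝ) : ℂ) * (((Real.cos β : ℝ) : ℂ) * ((Real.cos t₀ ^ (n + 1) : ℝ) : ℂ))
        = ((K * (Real.cos β * Real.cos t₀ ^ (n + 1)) : ℝ) : ℂ) by push_cast; ring]
    rw [hreal]
    norm_num
  · -- eval 1
    have h1 := (halW_eval1 t₀ n).1
    have h2 := (halW_eval1 t₀ n).2
    rw [← hudef] at h1
    rw [← hvdef] at h2
    have hcos : Real.cos β * Real.cos (((n : ℝ) + 1) * t₀)
        - Real.sin β * Real.sin (((n : ℝ) + 1) * t₀) = 0 := by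
      rw [← Real.cos_add]
      have harg : β + ((n : ℝ) + 1) * t₀ = Real.pi / 2 := by
        rw [hβdef, hncast]
        ring
      rw [harg, Real.cos_pi_div_two]
    rw [hpdef]
    simp only [eval_mul, eval_sub, eval_C, eval_X, h1, h2, one_mul]
    rw [show ((Real.cos β : ℝ) : ℂ) * ((Real.cos (((n : ℝ) + 1) * t₀) : ℝ) : ℂ)
        - ((Real.sin β : ℝ) : ℂ) * ((Real.sin (((n : ℝ) + 1) * t₀) : ℝ) : ℂ)
        = ((Real.cos β * Real.cos (((n : ℝ) + 1) * t₀)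
          - Real.sin β * Real.sin (((n : ℝ) + 1) * t₀) : ℝ) : ℂ) by push_cast; ring]
    rw [hcos]
    norm_num
  · -- norm bound
    intro z hz
    have hznorm : ‖z‖ = 1 := by
      rwa [mem_sphere_zero_iff_norm] at hz
    have hzsq : Complex.normSq z = 1 := by
      rw [Complex.normSq_eq_norm_sq, hznorm]
      norm_num
    have hsum := halW_normSq t₀ z hzsq n
    rw [← hudef, ← hvdef] at hsum
    have hupow : Complex.normSq (u.eval z) = ‖u.eval z‖ ^ 2 := by
      rw [Complex.normSq_eq_norm_sq]
    have hvpow : Complex.normSq (v.eval z) = ‖v.eval z‖ ^ 2 := by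
      rw [Complex.normSq_eq_norm_sq]
    rw [hupow, hvpow] at hsum
    have hb : ‖p.eval z‖ ≤ |Real.cos β| * ‖u.eval z‖ + |Real.sin β| * ‖v.eval z‖ := by
      rw [hpdef]
      simp only [eval_mul, eval_sub, eval_C, eval_X]
      refine le_trans (norm_sub_le _ _) ?_
      have e1 : ‖((Real.cos β : ℝ) : ℂ) * u.eval z‖ = |Real.cos β| * ‖u.eval z‖ := by
        rw [norm_mul, Complex.norm_real, Real.norm_eq_abs]
      have e2 : ‖((Real.sin β : ℝ) : ℂ) * (z * v.eval z)‖ = |Real.sin β| * ‖v.eval z‖ := by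
        rw [norm_mul, norm_mul, Complex.norm_real, Real.norm_eq_abs, hznorm, one_mul]
      rw [e1, e2]
    have hple : ‖p.eval z‖ ≤ 1 :=
      le_trans hb (hal_cs (Real.cos β) (Real.sin β) (‖u.eval z‖) (‖v.eval z‖)
        (norm_nonneg _) (norm_nonneg _) (Real.sin_sq_add_cos_sq β) hsum)
    have hH : ‖(C (K : ℂ) * p).eval z‖ = K * ‖p.eval z‖ := by
      simp only [eval_mul, eval_C]
      rw [norm_mul, Complex.norm_real, Real.norm_eq_abs, abs_of_pos hKpos]
    rw [hH, hKdef]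
    have : (1 : ℝ) + 2 / ((n + 1 : ℕ) : ℝ) ≥ 0 := by positivity
    nlinarith [hple, this]
end

section
/- Let ρ be a probability measure on 𝕋, n ≥ 3 an integer, and Ω ≥ 16 n log n. If e_n(ρ) ≤ e^{-Ω}, then there exist p ≤ n closed arcs I_1,...,I_p on 𝕋 such that Σ_{ℓ=1}^p 1/log(1/|I_ℓ|) ≤ 8 n log n / Ω and ρ(𝕋 \ ∪_ℓ I_ℓ) ≤ e^{-Ω}. -/
open MeasureTheory Complex Polynomial

/-- The Szegő minimum `e_n(ρ)`. -/
noncomputable def szegoE (ρ : Measure ℂ) (n : ℕ) : ℝ :=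
  Real.sqrt (szegoE2 ρ n)

/-- `I` is a closed arc of (arc-)length `len` on the unit circle. -/
def IsClosedArc (I : Set ℂ) (len : ℝ) : Prop :=
  ∃ a : ℝ, I = (fun θ : ℝ => Complex.exp (θ * Complex.I)) '' Set.Icc a (a + len)

open scoped Classical


/-- Product lower bound from counting condition. -/
lemma prodLemma (r : ℕ → ℝ) (h0 : ∀ k, 0 < r k) :
    ∀ (m : ℕ) (D : Multiset ℝ), D.card = m →
    (∀ k, 1 ≤ k → Multiset.countP (fun d => d ≤ r k) D < k) →
    ∏ k ∈ Finset.Icc 1 m, r k ≤ D.prod := by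
  intro m
  induction m with
  | zero => intro D hD _; simp [Multiset.card_eq_zero.mp hD]
  | succ m ih =>
    intro D hD hcount
    have hDne : D ≠ 0 := by
      intro h; rw [h] at hD; simp at hD
    obtain ⟨d, hdmem, hdmax⟩ : ∃ d ∈ D.toFinset, ∀ x ∈ D.toFinset, id x ≤ id d :=
      Finset.exists_max_image D.toFinset id (by
        obtain ⟨x, hx⟩ := Multiset.exists_mem_of_ne_zero hDne
        exact ⟨x, Multiset.mem_toFinset.mpr hx⟩)
    rw [Multiset.mem_toFinset] at hdmem
    have hdmax' : ∀ x ∈ D, x ≤ d := fun x hx => hdmax x (Multiset.mem_toFinset.mpr hx)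
    have hdr : r (m + 1) < d := by
      by_contra h
      push_neg at h
      have : Multiset.countP (fun x => x ≤ r (m+1)) D = D.card :=
        Multiset.countP_eq_card.mpr (fun x hx => le_trans (hdmax' x hx) h)
      have := hcount (m+1) (Nat.succ_le_succ (Nat.zero_le m))
      omega
    set D' := D.erase d with hD'
    have hcons : d ::ₘ D' = D := Multiset.cons_erase hdmem
    have hcard' : D'.card = m := by
      have := congrArg Multiset.card hcons
      simp at this; omega
    have hcount' : ∀ k, 1 ≤ k → Multiset.countP (fun x => x ≤ r k) D' < k := by
      intro k hk
      exact lt_of_le_of_lt (Multiset.countP_le_of_le _ (Multiset.erase_le d D)) (hcount k hk)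
    have hIH := ih D' hcard' hcount'
    have hpos : (0:ℝ) < ∏ k ∈ Finset.Icc 1 m, r k := Finset.prod_pos (fun k _ => h0 k)
    have hprod : D.prod = d * D'.prod := by rw [← hcons, Multiset.prod_cons]
    rw [hprod, Finset.prod_Icc_succ_top (Nat.succ_le_succ (Nat.zero_le m))]
    calc (∏ k ∈ Finset.Icc 1 m, r k) * r (m+1) ≤ D'.prod * d := by
          apply mul_le_mul hIH hdr.le (h0 _).le (le_trans hpos.le hIH)
      _ = d * D'.prod := mul_comm _ _

/-- Boutroux–Cartan lemma. -/
lemma cartan (r : ℕ → ℝ) (hr : Monotone r) (h0 : ∀ k, 0 < r k) (S : Multiset ℂ) :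
    ∃ (p : ℕ), p ≤ Multiset.card S ∧ ∃ (c : Fin p → ℂ) (lam : Fin p → ℕ),
      (∀ j, 1 ≤ lam j) ∧ (∑ j, lam j) = Multiset.card S ∧
      ∀ z : ℂ, (∀ j, 2 * r (lam j) < dist z (c j)) →
        ∀ k, 1 ≤ k → Multiset.countP (fun ζ => dist z ζ ≤ r k) S < k := by
  induction S using Multiset.strongInductionOn with
  | _ S ih =>
  by_cases hS : S = 0
  · refine ⟨0, by simp, Fin.elim0, Fin.elim0, by simp, by simp [hS], ?_⟩
    intro z _ k hk
    simp [hS]; omega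
  · set P : ℕ → Prop := fun m => 1 ≤ m ∧ ∃ c : ℂ,
      m ≤ Multiset.countP (fun ζ => dist c ζ ≤ r m) S with hP
    have hcardpos : 0 < Multiset.card S := Multiset.card_pos.mpr hS
    have hP1 : P 1 := by
      obtain ⟨x, hx⟩ := Multiset.exists_mem_of_ne_zero hS
      refine ⟨le_refl 1, x, ?_⟩
      rw [Nat.one_le_iff_ne_zero, ← Nat.pos_iff_ne_zero, Multiset.countP_pos]
      exact ⟨x, hx, by simp [(h0 1).le]⟩
    set l1 := Nat.findGreatest P (Multiset.card S) with hl1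
    have hl1spec : P l1 := Nat.findGreatest_spec hcardpos hP1
    have hl1le : l1 ≤ Multiset.card S := Nat.findGreatest_le _
    have hl1pos : 1 ≤ l1 := hl1spec.1
    obtain ⟨c₁, hc₁⟩ := hl1spec.2
    set T := S.filter (fun ζ => dist c₁ ζ ≤ r l1) with hT
    have hTle : T ≤ S := Multiset.filter_le _ S
    have hTcard_ge : l1 ≤ T.card := by
      rw [hT, ← Multiset.countP_eq_card_filter]; exact hc₁
    have hTcard : T.card = l1 := by
      refine le_antisymm ?_ hTcard_ge
      by_contra h
      push_neg at h
      have hsub : l1 + 1 ≤ Multiset.card S :=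
        le_trans h (Multiset.card_le_card hTle)
      have hPsucc : P (l1 + 1) := by
        refine ⟨by omega, c₁, ?_⟩
        calc l1 + 1 ≤ T.card := h
          _ = Multiset.countP (fun ζ => dist c₁ ζ ≤ r l1) S := by
              rw [hT, ← Multiset.countP_eq_card_filter]
          _ ≤ Multiset.countP (fun ζ => dist c₁ ζ ≤ r (l1+1)) S := by
              rw [Multiset.countP_eq_card_filter, Multiset.countP_eq_card_filter]
              apply Multiset.card_le_card
              exact Multiset.monotone_filter_right S
                (fun x hx => le_trans hx (hr (Nat.le_succ l1)))
      have := Nat.le_findGreatest hsub hPsucc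
      omega
    have hTne : T ≠ 0 := by
      intro h; rw [h] at hTcard; simp at hTcard; omega
    set S' := S - T with hS'
    have hS'le : S' ≤ S := tsub_le_self
    have hS'lt : S' < S := by
      refine lt_of_le_of_ne hS'le (fun h => ?_)
      have h3 : Multiset.card S' = Multiset.card S := congrArg _ h
      have h2 : Multiset.card S' + Multiset.card T = Multiset.card S := by
        rw [hS']
        have h4 := congrArg Multiset.card (tsub_add_cancel_of_le hTle)
        rw [Multiset.card_add] at h4
        exact h4
      rw [hTcard] at h2
      omega
    have hS'add : S' + T = S := tsub_add_cancel_of_le hTle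
    have hS'card : S'.card = Multiset.card S - l1 := by
      have h2 := congrArg Multiset.card hS'add
      rw [Multiset.card_add, hTcard] at h2
      omega
    obtain ⟨p', hp', c', lam', hlam1', hsum', hcover'⟩ := ih S' hS'lt
    refine ⟨p' + 1, ?_, Fin.cons c₁ c', Fin.cons l1 lam', ?_, ?_, ?_⟩
    · have : p' ≤ Multiset.card S - l1 := hp'.trans (le_of_eq hS'card)
      omega
    · intro j
      refine Fin.cases ?_ ?_ j
      · simpa using hl1pos
      · intro i; simpa using hlam1' i
    · rw [Fin.sum_cons, hsum', hS'card]; omega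
    · intro z hz k hk
      by_contra h
      push_neg at h
      have hz0 : 2 * r l1 < dist z c₁ := by simpa using hz 0
      have hzj : ∀ j, 2 * r (lam' j) < dist z (c' j) := by
        intro j; simpa using hz j.succ
      have hkcard : k ≤ Multiset.card S := by
        by_contra hkc
        push_neg at hkc
        exact absurd h (not_le.mpr (lt_of_le_of_lt (Multiset.countP_le_card _ _) hkc))
      have hkl1 : k ≤ l1 := by
        apply Nat.le_findGreatest hkcard
        exact ⟨hk, z, h⟩
      have hsplit : Multiset.countP (fun ζ => dist z ζ ≤ r k) S
          = Multiset.countP (fun ζ => dist z ζ ≤ r k) S'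
            + Multiset.countP (fun ζ => dist z ζ ≤ r k) T := by
        rw [← hS'add, Multiset.countP_add]
      have hS'count := hcover' z hzj k hk
      have hTpos : 0 < Multiset.countP (fun ζ => dist z ζ ≤ r k) T := by omega
      obtain ⟨ζ, hζT, hζd⟩ := Multiset.countP_pos.mp hTpos
      have hζ2 := Multiset.mem_filter.mp hζT
      have : dist z c₁ ≤ 2 * r l1 := by
        calc dist z c₁ ≤ dist z ζ + dist ζ c₁ := dist_triangle _ _ _
          _ ≤ r k + r l1 := add_le_add hζd (by rw [dist_comm]; exact hζ2.2)
          _ ≤ 2 * r l1 := by have := hr hkl1; linarith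
      linarith


/-- points of the unit circle in a small disk lie in a short arc around any
such point's argument -/
lemma arcCover (c : ℂ) (R : ℝ) (hR0 : 0 < R) (hRs : R ≤ 1/20) (z₀ z : ℂ)
    (h₀ : ‖z₀‖ = 1) (hz : ‖z‖ = 1)
    (hd₀ : dist z₀ c ≤ R) (hd : dist z c ≤ R) :
    ∃ θ ∈ Set.Icc (z₀.arg - 4*R) (z₀.arg + 4*R), Complex.exp (θ * Complex.I) = z := by
  have hz₀ne : z₀ ≠ 0 := by
    intro h; rw [h] at h₀; simp at h₀
  set δ := (z / z₀).arg with hδ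
  have hw : ‖z / z₀‖ = 1 := by
    rw [norm_div, h₀, hz]; norm_num
  have hexpw : Complex.exp ((δ:ℂ) * I) = z / z₀ := by
    have h1 := Complex.norm_mul_exp_arg_mul_I (z / z₀)
    rw [hw] at h1; simpa using h1
  have hexp₀ : Complex.exp ((z₀.arg : ℂ) * I) = z₀ := by
    have h1 := Complex.norm_mul_exp_arg_mul_I z₀
    rw [h₀] at h1; simpa using h1
  refine ⟨z₀.arg + δ, ?_, ?_⟩
  · -- bound |δ| ≤ 4R
    have hchord : ‖z - z₀‖ ≤ 2 * R := by
      have h1 : dist z z₀ ≤ 2 * R := by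
        have h2 := dist_triangle z c z₀
        rw [dist_comm c z₀] at h2
        linarith
      rw [Complex.dist_eq] at h1; exact h1
    have habs1 : ‖z / z₀ - 1‖ ≤ 2 * R := by
      have : z / z₀ - 1 = (z - z₀) / z₀ := by field_simp
      rw [this, norm_div, h₀, div_one]; exact hchord
    have hform : z / z₀ - 1 = (↑(Real.cos δ - 1) : ℂ) + ↑(Real.sin δ) * I := by
      rw [← hexpw, Complex.exp_mul_I]
      push_cast
      ring
    have hcossin : ‖z / z₀ - 1‖ ^ 2 = 2 - 2 * Real.cos δ := by
      rw [hform, Complex.sq_norm, Complex.normSq_apply]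
      simp only [Complex.add_re, Complex.add_im, Complex.ofReal_re, Complex.ofReal_im,
        Complex.mul_re, Complex.mul_im, Complex.I_re, Complex.I_im, mul_zero, mul_one,
        zero_mul, sub_zero, zero_add, add_zero, zero_sub]
      nlinarith [Real.sin_sq_add_cos_sq δ]
    have hsinhalf : |Real.sin (δ / 2)| ≤ R := by
      rw [Real.abs_sin_half]
      have h1 : (1 - Real.cos δ) / 2 ≤ R ^ 2 := by
        nlinarith [norm_nonneg (z / z₀ - 1)]
      calc Real.sqrt ((1 - Real.cos δ)/2) ≤ Real.sqrt (R^2) := Real.sqrt_le_sqrt h1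
        _ = R := Real.sqrt_sq hR0.le
    have hδpi : |δ| ≤ Real.pi := Complex.abs_arg_le_pi _
    have hπ : Real.pi ≤ 4 := by
      linarith [Real.pi_le_four]
    have hδ4R : |δ| ≤ 4 * R := by
      set x := |δ| / 2 with hx
      have hx0 : 0 ≤ x := by positivity
      have hxpi2 : x ≤ Real.pi / 2 := by rw [hx]; linarith
      have hsinx : Real.sin x ≤ R := by
        rw [hx]
        rcases le_or_gt 0 δ with h | h
        · rw [_root_.abs_of_nonneg h]
          calc Real.sin (δ/2) ≤ |Real.sin (δ/2)| := le_abs_self _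
            _ ≤ R := hsinhalf
        · rw [_root_.abs_of_neg h]
          have : Real.sin (-δ/2) = -Real.sin (δ/2) := by
            rw [neg_div, Real.sin_neg]
          rw [this]
          calc -Real.sin (δ/2) ≤ |Real.sin (δ/2)| := neg_le_abs _
            _ ≤ R := hsinhalf
      have hx2R : x ≤ 2 * R := by
        rcases eq_or_lt_of_le hx0 with h0 | h0
        · rw [← h0]; positivity
        rcases le_or_gt x 1 with h1 | h1
        · have hcube := Real.sin_gt_sub_cube h0
          have hx3 : x ^ 3 ≤ x := by
            nlinarith [mul_nonneg (mul_nonneg h0.le (sub_nonneg.mpr h1))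
              (by linarith : (0:ℝ) ≤ 1 + x)]
          nlinarith
        · exfalso
          have hs1 : Real.sin 1 ≤ Real.sin x := by
            apply Real.sin_le_sin_of_le_of_le_pi_div_two
              (by linarith [Real.pi_pos]) hxpi2 h1.le
          have : (3:ℝ)/4 < Real.sin 1 := by
            have := Real.sin_gt_sub_cube (by norm_num : (0:ℝ) < 1)
            norm_num at this
            linarith
          linarith
      rw [hx] at hx2R; linarith
    rw [abs_le] at hδ4R
    constructor <;> linarith [hδ4R.1, hδ4R.2]
  · push_cast
    rw [add_mul, Complex.exp_add, hexp₀, hexpw]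
    field_simp


lemma normEvalProd (q : Polynomial ℂ) (hq : q.Monic) (z : ℂ) :
    ‖q.eval z‖ = ((q.roots.map (fun ζ => dist z ζ)).prod) := by
  have hcard : Multiset.card q.roots = q.natDegree :=
    Polynomial.splits_iff_card_roots.mp (IsAlgClosed.splits q)
  have hfact := Polynomial.prod_multiset_X_sub_C_of_monic_of_roots_card_eq hq hcard
  conv_lhs => rw [← hfact]
  rw [Polynomial.eval_multiset_prod, show ∀ s : Multiset ℂ, ‖s.prod‖ = (s.map (fun x => ‖x‖)).prod from
      fun s => map_multiset_prod (normHom : ℂ →*₀ ℝ) s, Multiset.map_map, Multiset.map_map]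
  congr 1
  apply Multiset.map_congr rfl
  intro ζ _
  simp [Complex.dist_eq]

set_option maxHeartbeats 1000000 in
theorem stmt8 (ρ : Measure ℂ) [IsProbabilityMeasure ρ]
    (hsupp : ρ (Metric.sphere (0 : ℂ) 1)ᶜ = 0)
    (n : ℕ) (hn : 3 ≤ n) (Ω : ℝ) (hΩ : 16 * n * Real.log n ≤ Ω)
    (he : szegoE ρ n ≤ Real.exp (-Ω)) :
    ∃ (p : ℕ) (_ : p ≤ n) (I : Fin p → Set ℂ) (len : Fin p → ℝ),
      (∀ ℓ, IsClosedArc (I ℓ) (len ℓ) ∧ 0 < len ℓ ∧ len ℓ < 1) ∧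
      (∑ ℓ, 1 / Real.log (1 / len ℓ)) ≤ 8 * n * Real.log n / Ω ∧
      ρ (Metric.sphere (0 : ℂ) 1 \ ⋃ ℓ, I ℓ) ≤ ENNReal.ofReal (Real.exp (-Ω)) := by
  classical
  set E := Real.exp (-Ω) with hE
  set L := Real.log n with hLdef
  have hEpos : 0 < E := Real.exp_pos _
  have hn3 : (3:ℝ) ≤ (n:ℝ) := by exact_mod_cast hn
  have hL1 : 1 < L := by
    have h3 : (1:ℝ) < Real.log 3 := by
      rw [show (1:ℝ) = Real.log (Real.exp 1) by rw [Real.log_exp]]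
      apply Real.log_lt_log (Real.exp_pos 1)
      linarith [Real.exp_one_lt_d9]
    calc (1:ℝ) < Real.log 3 := h3
      _ ≤ L := Real.log_le_log (by norm_num) hn3
  have hLpos : 0 < L := by linarith
  have hΩpos : 0 < Ω := by nlinarith
  have hΩ48 : 48 ≤ Ω := by nlinarith
  -- obtain a near-minimizer q
  obtain ⟨q, hqm, hqd, hqint⟩ :
      ∃ q : Polynomial ℂ, q.Monic ∧ q.natDegree = n ∧
        (∫ z, ‖q.eval z‖ ^ 2 ∂ρ) < 2 * E ^ 2 := by
    set s := { x | ∃ q : Polynomial ℂ, q.Monic ∧ q.natDegree = n ∧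
      x = ∫ z, ‖q.eval z‖ ^ 2 ∂ρ } with hs
    have hne : s.Nonempty := by
      refine ⟨∫ z, ‖(Polynomial.X ^ n : Polynomial ℂ).eval z‖ ^ 2 ∂ρ,
        Polynomial.X ^ n, Polynomial.monic_X_pow n, by simp, rfl⟩
    have hbdd : BddBelow s := by
      refine ⟨0, fun x hx => ?_⟩
      obtain ⟨q, _, _, rfl⟩ := hx
      exact integral_nonneg (fun z => by positivity)
    have hnonneg : 0 ≤ szegoE2 ρ n := Real.sInf_nonneg (fun x hx => by
      obtain ⟨q, _, _, rfl⟩ := hx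
      exact integral_nonneg (fun z => by positivity))
    have hE2 : szegoE2 ρ n ≤ E ^ 2 := by
      have h1 : szegoE2 ρ n = Real.sqrt (szegoE2 ρ n) ^ 2 :=
        (Real.sq_sqrt hnonneg).symm
      rw [h1]
      exact pow_le_pow_left₀ (Real.sqrt_nonneg _) he 2
    have hlt : sInf s < 2 * E ^ 2 := by
      have : szegoE2 ρ n < 2 * E ^ 2 := lt_of_le_of_lt hE2 (by nlinarith)
      exact this
    obtain ⟨x, hxs, hxlt⟩ := (csInf_lt_iff hbdd hne).mp hlt
    obtain ⟨q, hq1, hq2, rfl⟩ := hxs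
    exact ⟨q, hq1, hq2, hxlt⟩
  -- the radii
  set r : ℕ → ℝ := fun k => Real.exp (-(Ω / (8 * ((max k 1 : ℕ) : ℝ) * L))) / 16 with hrdef
  have hr0 : ∀ k, 0 < r k := fun k => by positivity
  have hrmono : Monotone r := by
    intro k k' hkk'
    have hm : ((max k 1 : ℕ) : ℝ) ≤ ((max k' 1 : ℕ) : ℝ) := by
      exact_mod_cast max_le_max hkk' (le_refl 1)
    have hm1 : (1:ℝ) ≤ ((max k 1 : ℕ) : ℝ) := by
      exact_mod_cast Nat.le_max_right k 1
    rw [hrdef]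
    simp only
    gcongr
  -- Cartan decomposition of the roots
  have hcard : Multiset.card q.roots = n := by
    rw [Polynomial.splits_iff_card_roots.mp (IsAlgClosed.splits q)] at *
    · exact hqd
  obtain ⟨p, hp, c, lam, hlam1, hlamsum, hcover⟩ := cartan r hrmono hr0 q.roots
  rw [hcard] at hp hlamsum
  have hlamn : ∀ j, lam j ≤ n := by
    intro j
    rw [← hlamsum]
    exact Finset.single_le_sum (fun i _ => Nat.zero_le _) (Finset.mem_univ j)
  -- arc lengths
  set len : Fin p → ℝ := fun j => Real.exp (-(Ω / (8 * ((lam j : ℕ) : ℝ) * L))) with hlendef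
  have hlamR1 : ∀ j, (1:ℝ) ≤ ((lam j : ℕ) : ℝ) := fun j => by exact_mod_cast hlam1 j
  have hlamRn : ∀ j, ((lam j : ℕ) : ℝ) ≤ (n:ℝ) := fun j => by exact_mod_cast hlamn j
  have hlen16 : ∀ j, len j = 16 * r (lam j) := by
    intro j
    rw [hlendef, hrdef]
    simp only
    rw [Nat.max_eq_left (hlam1 j)]
    ring
  have hden : ∀ j, (0:ℝ) < 8 * ((lam j : ℕ) : ℝ) * L := by
    intro j
    have := hlamR1 j
    nlinarith
  have hx2 : ∀ j, 2 ≤ Ω / (8 * ((lam j : ℕ) : ℝ) * L) := by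
    intro j
    rw [le_div_iff₀ (hden j)]
    have h1 := hlamRn j
    nlinarith
  have hxpos : ∀ j, 0 < Ω / (8 * ((lam j : ℕ) : ℝ) * L) := by
    intro j
    exact div_pos hΩpos (hden j)
  have hlenpos : ∀ j, 0 < len j := fun j => Real.exp_pos _
  have hlenlt1 : ∀ j, len j < 1 := by
    intro j
    have hneg : (-(Ω / (8 * ((lam j : ℕ) : ℝ) * L))) < 0 := by linarith [hxpos j]
    rw [hlendef]
    simp only
    calc Real.exp (-(Ω / (8 * ((lam j : ℕ) : ℝ) * L))) < Real.exp 0 :=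
          Real.exp_lt_exp.mpr hneg
      _ = 1 := Real.exp_zero
  -- small radius bound
  have hRsmall : ∀ j, 2 * r (lam j) ≤ 1 / 20 := by
    intro j
    have h1 : len j ≤ Real.exp (-2) := by
      rw [hlendef]
      simp only
      apply Real.exp_le_exp.mpr
      have := hx2 j
      linarith
    have h2 : Real.exp (-2) ≤ 2/5 := by
      have he1 := Real.exp_one_gt_d9
      have h3 : (5:ℝ)/2 ≤ Real.exp 2 := by
        rw [show (2:ℝ) = 1 + 1 by norm_num, Real.exp_add]
        nlinarith
      rw [Real.exp_neg]
      rw [inv_le_comm₀ (Real.exp_pos 2) (by norm_num)]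
      linarith
    have h3 : 2 * r (lam j) = len j / 8 := by rw [hlen16 j]; ring
    rw [h3]
    linarith
  -- arcs
  set a : Fin p → ℝ := fun j =>
    if h : ∃ w : ℂ, ‖w‖ = 1 ∧ dist w (c j) ≤ 2 * r (lam j)
    then (Classical.choose h).arg else 0 with hadef
  set I : Fin p → Set ℂ := fun j =>
    (fun θ : ℝ => Complex.exp (θ * Complex.I)) ''
      Set.Icc (a j - len j / 2) (a j - len j / 2 + len j) with hIdef
  refine ⟨p, hp, I, len, ?_, ?_, ?_⟩
  · exact fun j => ⟨⟨a j - len j / 2, rfl⟩, hlenpos j, hlenlt1 j⟩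
  · -- the sum of reciprocal log-lengths
    have hterm : ∀ j, 1 / Real.log (1 / len j) = 8 * ((lam j : ℕ) : ℝ) * L / Ω := by
      intro j
      rw [hlendef]
      simp only
      rw [show (1:ℝ) / Real.exp (-(Ω / (8 * ((lam j : ℕ) : ℝ) * L)))
          = Real.exp (Ω / (8 * ((lam j : ℕ) : ℝ) * L)) by
        rw [Real.exp_neg, one_div, inv_inv]]
      rw [Real.log_exp, one_div_div]
    rw [Finset.sum_congr rfl (fun j _ => hterm j)]
    have hsumc : ∑ j, 8 * ((lam j : ℕ) : ℝ) * L / Ω = 8 * (n:ℝ) * L / Ω := by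
      rw [← Finset.sum_div]
      congr 1
      have hcast : ∑ j, ((lam j : ℕ) : ℝ) = (n:ℝ) := by exact_mod_cast hlamsum
      calc ∑ j, 8 * ((lam j : ℕ) : ℝ) * L = 8 * L * ∑ j, ((lam j : ℕ) : ℝ) := by
            rw [Finset.mul_sum]; apply Finset.sum_congr rfl; intro j _; ring
        _ = 8 * (n:ℝ) * L := by rw [hcast]; ring
    rw [hsumc]
  · -- measure bound
    set t : ℝ := ∏ k ∈ Finset.Icc 1 n, r k with htdef
    have ht0 : 0 < t := Finset.prod_pos (fun k _ => hr0 k)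
    -- coverage: outside the arcs the polynomial is large
    have hsub : Metric.sphere (0:ℂ) 1 \ (⋃ j, I j) ⊆ {z : ℂ | t ≤ ‖q.eval z‖} := by
      rintro z ⟨hzs, hzn⟩
      have habs : ‖z‖ = 1 := by
        rw [Metric.mem_sphere, Complex.dist_eq, sub_zero] at hzs
        exact hzs
      by_contra hlt
      simp only [Set.mem_setOf_eq, not_le] at hlt
      have hfar : ¬ (∀ j, 2 * r (lam j) < dist z (c j)) := by
        intro hall
        have hc := hcover z hall
        have hD := prodLemma r hr0 n (q.roots.map (fun ζ => dist z ζ))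
          (by rw [Multiset.card_map, hcard])
          (fun k hk => by
            have h1 := hc k hk
            rw [Multiset.countP_eq_card_filter] at h1 ⊢
            rw [Multiset.filter_map, Multiset.card_map]
            convert h1 using 2
            exact Multiset.filter_congr (fun _ _ => Iff.rfl))
        rw [← normEvalProd q hqm z] at hD
        rw [htdef] at hlt
        linarith
      push_neg at hfar
      obtain ⟨j, hj⟩ := hfar
      have hex : ∃ w : ℂ, ‖w‖ = 1 ∧ dist w (c j) ≤ 2 * r (lam j) :=
        ⟨z, habs, hj⟩
      have haj : a j = (Classical.choose hex).arg := by
        rw [hadef]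
        simp only
        rw [dif_pos hex]
      obtain ⟨hw1, hw2⟩ := Classical.choose_spec hex
      obtain ⟨θ, hθmem, hθeq⟩ := arcCover (c j) (2 * r (lam j))
        (by positivity) (hRsmall j) (Classical.choose hex) z hw1 habs hw2 hj
      have h48 : 4 * (2 * r (lam j)) = len j / 2 := by rw [hlen16 j]; ring
      apply hzn
      apply Set.mem_iUnion.mpr
      refine ⟨j, θ, ?_, hθeq⟩
      obtain ⟨hθ1, hθ2⟩ := hθmem
      constructor
      · rw [haj]; linarith
      · rw [haj]; linarith
    -- lower bound for t
    have hlogr : ∀ k ∈ Finset.Icc 1 n, Real.log (r k)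
        = -(Ω / (8 * L) * (1 / (k:ℝ))) - Real.log 16 := by
      intro k hk
      have hk1 : 1 ≤ k := (Finset.mem_Icc.mp hk).1
      have hkR : (1:ℝ) ≤ (k:ℝ) := by exact_mod_cast hk1
      rw [hrdef]
      simp only
      rw [Nat.max_eq_left hk1]
      rw [Real.log_div (Real.exp_ne_zero _) (by norm_num), Real.log_exp]
      have : Ω / (8 * (k:ℝ) * L) = Ω / (8 * L) * (1 / (k:ℝ)) := by
        rw [div_mul_div_comm, mul_one]
        congr 1
        ring
      rw [this]
    have hlogt : Real.log t = -(Ω / (8 * L) * (∑ k ∈ Finset.Icc 1 n, 1 / (k:ℝ)))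
        - (n:ℝ) * Real.log 16 := by
      rw [htdef, Real.log_prod (fun k _ => (hr0 k).ne')]
      rw [Finset.sum_congr rfl hlogr, Finset.sum_sub_distrib, Finset.sum_neg_distrib,
        ← Finset.mul_sum, Finset.sum_const, Nat.card_Icc]
      simp only [Nat.add_sub_cancel, nsmul_eq_mul]
    have hharm : ∑ k ∈ Finset.Icc 1 n, 1 / (k:ℝ) ≤ 1 + L := by
      have h1 := harmonic_le_one_add_log n
      have h2 : ((harmonic n : ℚ) : ℝ) = ∑ k ∈ Finset.Icc 1 n, 1 / (k:ℝ) := by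
        rw [harmonic_eq_sum_Icc]
        push_cast
        simp [one_div]
      rw [h2] at h1
      rw [hLdef]
      exact h1
    have hlog16 : Real.log 16 ≤ 2.7725888 := by
      have h2 := Real.log_two_lt_d9
      have h16 : (16:ℝ) = 2 ^ (4:ℕ) := by norm_num
      rw [h16, Real.log_pow]
      push_cast
      linarith
    have hlog16nn : 0 ≤ Real.log 16 := Real.log_nonneg (by norm_num)
    have hA : Ω / (8 * L) * (1 + L) ≤ Ω / 4 := by
      rw [div_mul_eq_mul_div, div_le_div_iff₀ (by positivity) (by norm_num)]
      nlinarith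
    have hApos : 0 < Ω / (8 * L) := by positivity
    have hnΩ : (n:ℝ) ≤ Ω / 16 := by
      have h1 : 16 * (n:ℝ) ≤ 16 * (n:ℝ) * L := by nlinarith
      linarith
    have hAmono : Ω / (8 * L) * (∑ k ∈ Finset.Icc 1 n, 1 / (k:ℝ))
        ≤ Ω / (8 * L) * (1 + L) :=
      mul_le_mul_of_nonneg_left hharm hApos.le
    have hnlog : (n:ℝ) * Real.log 16 ≤ (Ω / 16) * 2.7725888 :=
      mul_le_mul hnΩ hlog16 hlog16nn (by positivity)
    have hlogt_ge : (Real.log 2 - Ω) / 2 ≤ Real.log t := by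
      have hlog2 : Real.log 2 < 0.6931471808 := Real.log_two_lt_d9
      rw [hlogt]
      linarith
    have ht2 : 2 * E ≤ t ^ 2 := by
      have h1 : Real.log 2 - Ω ≤ 2 * Real.log t := by linarith
      have h2 : Real.exp (Real.log 2 - Ω) ≤ Real.exp (2 * Real.log t) :=
        Real.exp_le_exp.mpr h1
      rw [Real.exp_sub, Real.exp_log (by norm_num : (0:ℝ) < 2),
        show (2:ℝ) * Real.log t = Real.log t + Real.log t by ring,
        Real.exp_add, Real.exp_log ht0] at h2
      have h3 : 2 * E = 2 / Real.exp Ω := by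
        rw [hE, Real.exp_neg]
        ring
      rw [h3, pow_two]
      exact h2
    -- integrability
    set f : ℂ → ℝ := fun z => ‖q.eval z‖ ^ 2 with hfdef
    have hcont : Continuous f := (q.continuous.norm.pow 2)
    set B : ℝ := ∑ i ∈ Finset.range (n + 1), ‖q.coeff i‖ with hBdef
    have hBfn : ∀ z ∈ Metric.sphere (0:ℂ) 1, ‖q.eval z‖ ≤ B := by
      intro z hz
      have hz1 : ‖z‖ = 1 := by
        rw [Metric.mem_sphere, dist_zero_right] at hz
        exact hz
      rw [Polynomial.eval_eq_sum_range, hqd]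
      calc ‖∑ i ∈ Finset.range (n + 1), q.coeff i * z ^ i‖
          ≤ ∑ i ∈ Finset.range (n + 1), ‖q.coeff i * z ^ i‖ := norm_sum_le _ _
        _ = B := by
            rw [hBdef]
            apply Finset.sum_congr rfl
            intro i _
            rw [norm_mul, norm_pow, hz1, one_pow, mul_one]
    have hae_sphere : ∀ᵐ z ∂ρ, z ∈ Metric.sphere (0:ℂ) 1 := by
      rw [ae_iff]
      exact hsupp
    have hInt : Integrable f ρ := by
      apply Integrable.mono' (integrable_const (B ^ 2)) hcont.aestronglyMeasurable
      filter_upwards [hae_sphere] with z hz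
      have h1 := hBfn z hz
      have h2 : ‖f z‖ = ‖q.eval z‖ ^ 2 := by
        rw [hfdef]
        simp only [Real.norm_eq_abs]
        exact abs_of_nonneg (by positivity)
      rw [h2]
      exact pow_le_pow_left₀ (norm_nonneg _) h1 2
    -- Markov
    have hmark := mul_meas_ge_le_integral_of_nonneg
      (Filter.Eventually.of_forall (fun z => by positivity : ∀ z, 0 ≤ f z)) hInt (t ^ 2)
    have hfin : ρ {x | t ^ 2 ≤ f x} ≠ ⊤ := measure_ne_top ρ _
    have htoReal : (ρ {x | t ^ 2 ≤ f x}).toReal ≤ E := by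
      by_contra hcon
      push_neg at hcon
      have ht2pos : 0 < t ^ 2 := by positivity
      rw [measureReal_def] at hmark
      nlinarith [hmark, hqint]
    calc ρ (Metric.sphere (0:ℂ) 1 \ ⋃ j, I j)
        ≤ ρ {z : ℂ | t ≤ ‖q.eval z‖} := measure_mono hsub
      _ ≤ ρ {x | t ^ 2 ≤ f x} := by
          apply measure_mono
          intro z hz
          simp only [Set.mem_setOf_eq] at hz ⊢
          rw [hfdef]
          exact pow_le_pow_left₀ ht0.le hz 2
      _ = ENNReal.ofReal ((ρ {x | t ^ 2 ≤ f x}).toReal) :=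
          (ENNReal.ofReal_toReal hfin).symm
      _ ≤ ENNReal.ofReal (Real.exp (-Ω)) := by
          apply ENNReal.ofReal_le_ofReal
          rw [← hE]
          exact htoReal
end

section
/- For −1 ≤ α ≤ 1, the integral (1/2π) ∫_{−π}^{π} log(1 + α cos θ) dθ equals log((1 + √(1−α²))/2). -/
open Real MeasureTheory intervalIntegral Metric

lemma key_complex (r : ℝ) (hr : |r| < 1) :
    ∫ θ in (0:ℝ)..(2*π), Complex.log (1 + r * Complex.exp (θ * Complex.I)) = 0 := by
  set f : ℂ → ℂ := fun z => Complex.log (1 + r * z) with hf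
  have hdiff : DifferentiableOn ℂ f (closedBall 0 1) := by
    intro z hz
    have hre : (0:ℝ) < (1 + (r:ℂ) * z).re := by
      simp only [Complex.add_re, Complex.one_re, Complex.mul_re, Complex.ofReal_re,
        Complex.ofReal_im, zero_mul, sub_zero]
      have h1 : |z.re| ≤ 1 := (Complex.abs_re_le_norm z).trans
        (by simpa using mem_closedBall_zero_iff.mp hz)
      nlinarith [neg_abs_le (r * z.re), abs_mul r z.re, abs_nonneg r, abs_nonneg z.re,
        mul_le_mul_of_nonneg_left h1 (abs_nonneg r)]
    exact ((Complex.differentiableAt_log (Complex.mem_slitPlane_iff.2 (Or.inl hre))).comp z (f := fun z : ℂ => 1 + (r:ℂ) * z)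
      (by fun_prop)).differentiableWithinAt
  have hcauchy := (hdiff.circleIntegral_sub_inv_smul (c := 0) (R := 1) (w := 0)
    (by simp [mem_ball_zero_iff]))
  have hf0 : f 0 = 0 := by simp [hf]
  rw [hf0, smul_zero] at hcauchy
  rw [circleIntegral] at hcauchy
  have heq : ∀ θ : ℝ, (deriv (circleMap 0 1) θ) •
      ((circleMap 0 1 θ - 0)⁻¹ • f (circleMap 0 1 θ)) = Complex.I * f (circleMap 0 1 θ) := by
    intro θ
    have hne : circleMap 0 1 θ ≠ 0 := circleMap_ne_center one_ne_zero
    rw [deriv_circleMap]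
    field_simp [smul_eq_mul]
    rw [smul_eq_mul, smul_eq_mul, sub_zero, one_div,
      show circleMap 0 1 θ * Complex.I * ((circleMap 0 1 θ)⁻¹ * f (circleMap 0 1 θ))
        = (circleMap 0 1 θ * (circleMap 0 1 θ)⁻¹) * (Complex.I * f (circleMap 0 1 θ)) by ring,
      mul_inv_cancel₀ hne, one_mul]
  simp only [heq] at hcauchy
  rw [intervalIntegral.integral_const_mul] at hcauchy
  have := mul_eq_zero.mp hcauchy
  rcases this with h | h
  · exact absurd h Complex.I_ne_zero
  · simpa [circleMap] using h

lemma one_add_ne (r : ℝ) (hr : |r| < 1) (θ : ℝ) :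
    (1 : ℂ) + r * Complex.exp (θ * Complex.I) ≠ 0 := by
  intro h
  have : ‖(r:ℂ) * Complex.exp (θ * Complex.I)‖ = 1 := by
    have : (r:ℂ) * Complex.exp (θ * Complex.I) = -1 := by linear_combination h
    rw [this]; simp
  rw [norm_mul, Complex.norm_exp] at this
  simp at this
  rw [this] at hr; simp at hr

lemma habs_sq (r θ : ℝ) :
    ‖1 + r * Complex.exp (θ * Complex.I)‖ ^ 2 = 1 + 2*r*Real.cos θ + r^2 := by
  rw [← Complex.normSq_eq_norm_sq, Complex.normSq_apply]
  simp [Complex.add_re, Complex.add_im, Complex.mul_re, Complex.mul_im,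
    Complex.exp_ofReal_mul_I_re, Complex.exp_ofReal_mul_I_im]
  nlinarith [Real.sin_sq_add_cos_sq θ]

lemma key_pos (r : ℝ) (hr : |r| < 1) (θ : ℝ) : 0 < 1 + 2*r*Real.cos θ + r^2 := by
  rw [← habs_sq r θ]
  have h := one_add_ne r hr θ
  have : 0 < ‖1 + r * Complex.exp (θ * Complex.I)‖ := by
    simpa [norm_pos_iff] using h
  positivity

lemma hcont_log (r : ℝ) (hr : |r| < 1) :
    Continuous fun θ : ℝ => Complex.log (1 + r * Complex.exp (θ * Complex.I)) := by
  rw [continuous_iff_continuousAt]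
  intro θ
  have hc : ContinuousAt (fun θ : ℝ => (1:ℂ) + r * Complex.exp (θ * Complex.I)) θ := by
    fun_prop
  have hslit : (1 : ℂ) + r * Complex.exp (θ * Complex.I) ∈ Complex.slitPlane := by
    rw [Complex.mem_slitPlane_iff]
    left
    have hre : (1 + (r:ℂ) * Complex.exp (θ * Complex.I)).re = 1 + r * Real.cos θ := by
      simp [Complex.add_re, Complex.mul_re, Complex.exp_ofReal_mul_I_re,
        Complex.exp_ofReal_mul_I_im]
    rw [hre]
    nlinarith [Real.neg_one_le_cos θ, Real.cos_le_one θ, abs_nonneg r, neg_abs_le r, le_abs_self r,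
      abs_mul_abs_self r]
  exact ContinuousAt.comp (g := Complex.log)
    (f := fun θ : ℝ => (1:ℂ) + r * Complex.exp (θ * Complex.I)) (continuousAt_clog hslit) hc

lemma key_real (r : ℝ) (hr : |r| < 1) :
    ∫ θ in (0:ℝ)..(2*π), Real.log (1 + 2*r*Real.cos θ + r^2) = 0 := by
  have hre : ∀ θ : ℝ, Real.log (1 + 2*r*Real.cos θ + r^2)
      = 2 * (Complex.log (1 + r * Complex.exp (θ * Complex.I))).re := by
    intro θ
    rw [Complex.log_re, ← habs_sq r θ, Real.log_pow]
    push_cast; ring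
  simp only [hre]
  rw [intervalIntegral.integral_const_mul]
  have hint : IntervalIntegrable (fun θ : ℝ => Complex.log (1 + r * Complex.exp (θ * Complex.I)))
      volume 0 (2*π) := ((hcont_log r hr).intervalIntegrable _ _)
  have := Complex.reCLM.intervalIntegral_comp_comm hint
  simp only [Complex.reCLM_apply] at this
  rw [this, key_complex r hr]
  simp

lemma key_real' (r : ℝ) (hr : |r| < 1) :
    ∫ θ in (-π)..π, Real.log (1 + 2*r*Real.cos θ + r^2) = 0 := by
  have hper : Function.Periodic (fun θ => Real.log (1 + 2*r*Real.cos θ + r^2)) (2*π) := by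
    have := Real.cos_periodic.comp (fun x => Real.log (1 + 2*r*x + r^2))
    simpa [Function.comp] using this
  have h := hper.intervalIntegral_add_eq (-π) 0
  have h2 : -π + 2*π = π := by ring
  rw [h2, zero_add] at h
  rw [h, key_real r hr]

lemma main_lt (α : ℝ) (hα : |α| < 1) :
    ∫ θ in (-π)..π, Real.log (1 + α * Real.cos θ)
      = 2*π*Real.log ((1 + Real.sqrt (1-α^2))/2) := by
  set s := Real.sqrt (1-α^2) with hs_def
  have hα2 : α^2 < 1 := by nlinarith [sq_abs α, abs_nonneg α]
  have hs0 : 0 < s := Real.sqrt_pos.2 (by linarith)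
  have hssq : s^2 = 1 - α^2 := Real.sq_sqrt (by linarith)
  set r := α/(1+s) with hr_def
  have h1s : (0:ℝ) < 1 + s := by linarith
  have hr : |r| < 1 := by
    rw [hr_def, abs_div, abs_of_pos h1s, div_lt_one h1s]
    linarith
  have hra : r * (1+s) = α := by rw [hr_def]; field_simp
  have hinv : (1 + r^2) * ((1+s)/2) = 1 := by
    rw [hr_def]; field_simp; nlinarith [hssq]
  have hkey : ∀ θ : ℝ, 1 + α * Real.cos θ = (1 + 2*r*Real.cos θ + r^2) * ((1+s)/2) := by
    intro θ
    linear_combination -hinv - Real.cos θ * hra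
  have hlog : ∀ θ : ℝ, Real.log (1 + α * Real.cos θ)
      = Real.log (1 + 2*r*Real.cos θ + r^2) + Real.log ((1+s)/2) := by
    intro θ
    rw [hkey θ, Real.log_mul (key_pos r hr θ).ne' (by positivity)]
  have hcont : Continuous fun θ : ℝ => Real.log (1 + 2*r*Real.cos θ + r^2) :=
    Continuous.log (by fun_prop) (fun θ => (key_pos r hr θ).ne')
  calc ∫ θ in (-π)..π, Real.log (1 + α * Real.cos θ)
      = ∫ θ in (-π)..π, (Real.log (1 + 2*r*Real.cos θ + r^2) + Real.log ((1+s)/2)) := by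
        apply intervalIntegral.integral_congr
        intro θ _
        exact hlog θ
    _ = (∫ θ in (-π)..π, Real.log (1 + 2*r*Real.cos θ + r^2))
        + ∫ θ in (-π)..π, Real.log ((1+s)/2) := by
        rw [intervalIntegral.integral_add (hcont.intervalIntegrable _ _)
          (intervalIntegrable_const)]
    _ = 2*π*Real.log ((1+s)/2) := by
        rw [key_real' r hr, intervalIntegral.integral_const, zero_add, smul_eq_mul]
        ring

lemma log_ii01 : IntervalIntegrable Real.log volume 0 1 := by
  have h : IntervalIntegrable (fun x : ℝ => -Real.log x) volume 0 1 := by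
    apply intervalIntegral.intervalIntegrable_deriv_of_nonneg
      (g := fun x : ℝ => x - x * Real.log x)
    · exact (continuous_id.sub Real.continuous_mul_log).continuousOn
    · intro x hx
      simp only [min_def, max_def] at hx
      norm_num at hx
      have := Real.hasDerivAt_mul_log (x := x) (by linarith [hx.1])
      have h2 := (hasDerivAt_id x).sub this
      exact h2.congr_deriv (by ring)
    · intro x hx
      simp only [min_def, max_def] at hx
      norm_num at hx
      simp only [neg_nonneg]
      exact Real.log_nonpos (by linarith [hx.1]) (by linarith [hx.2])
  have h2 := h.neg
  simp only [Pi.neg_def, neg_neg] at h2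
  exact h2

lemma log_ii0pi : IntervalIntegrable Real.log volume 0 π :=
  log_ii01.trans (intervalIntegrable_log (by
    rw [Set.mem_uIcc]; push_neg
    constructor <;> intro h <;> [skip; linarith [Real.pi_pos]] <;> linarith))

lemma log_dist_ii : IntervalIntegrable (fun θ : ℝ => Real.log (π - |θ|)) volume (-π) π := by
  have h1 : IntervalIntegrable (fun θ : ℝ => Real.log (π - |θ|)) volume 0 π := by
    have := (log_ii0pi.comp_sub_left π).symm
    rw [sub_self, sub_zero] at this
    rw [intervalIntegrable_iff] at this ⊢
    apply this.congr_fun ?_ measurableSet_uIoc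
    intro θ hθ
    rw [Set.uIoc_of_le Real.pi_pos.le] at hθ
    show Real.log (π - θ) = Real.log (π - |θ|)
    rw [abs_of_pos hθ.1]
  have h2 : IntervalIntegrable (fun θ : ℝ => Real.log (π - |θ|)) volume (-π) 0 := by
    have := log_ii0pi.comp_sub_right (-π)
    rw [zero_add, add_neg_cancel] at this
    rw [intervalIntegrable_iff] at this ⊢
    apply this.congr_fun ?_ measurableSet_uIoc
    intro θ hθ
    rw [Set.uIoc_of_le (by linarith [Real.pi_pos] : -π ≤ (0:ℝ))] at hθ
    show Real.log (θ - -π) = Real.log (π - |θ|)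
    rw [abs_of_nonpos hθ.2]
    congr 1
    ring
  exact h2.trans h1

lemma low_bound (θ : ℝ) (hθ : |θ| ≤ π) : 2*((π-|θ|)/π)^2 ≤ 1 + Real.cos θ := by
  have hpi := Real.pi_pos
  have hu0 : 0 ≤ |θ| := abs_nonneg θ
  have hs : Real.sin ((π - |θ|)/2) = Real.cos (|θ|/2) := by
    rw [← Real.sin_pi_div_two_sub]
    congr 1
    ring
  have hj : 2/π * ((π - |θ|)/2) ≤ Real.sin ((π - |θ|)/2) :=
    Real.mul_le_sin (by linarith) (by linarith)
  have hsq : Real.cos (|θ|/2) ^ 2 = 1/2 + Real.cos |θ| / 2 := by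
    have := Real.cos_sq (|θ|/2)
    rwa [show 2*(|θ|/2) = |θ| by ring] at this
  have hcos : Real.cos |θ| = Real.cos θ := Real.cos_abs θ
  have hw : 2/π * ((π - |θ|)/2) = (π - |θ|)/π := by ring
  rw [hw, hs] at hj
  have hwpos : 0 ≤ (π - |θ|)/π := div_nonneg (by linarith) hpi.le
  nlinarith [hj, hsq, hcos, sq_nonneg (Real.cos (|θ|/2) - (π - |θ|)/π)]

lemma abs_log_le (a θ : ℝ) (ha : a ∈ Set.Icc (0:ℝ) 1) (hθ : θ ∈ Set.Ioo (-π) π) :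
    |Real.log (1 + a * Real.cos θ)| ≤ 2*Real.log 2 + 2*Real.log π + 2*|Real.log (π - |θ|)| := by
  have hpi := Real.pi_gt_three
  have hpi0 := Real.pi_pos
  have habs : |θ| < π := abs_lt.2 ⟨hθ.1, hθ.2⟩
  have hm : 0 < π - |θ| := by linarith
  have hlow := low_bound θ habs.le
  have hub : 1 + a * Real.cos θ ≤ 2 := by
    nlinarith [Real.cos_le_one θ, Real.neg_one_le_cos θ, ha.1, ha.2]
  have hlb : ((π - |θ|)/π)^2 ≤ 1 + a * Real.cos θ := by
    rcases le_or_gt 0 (Real.cos θ) with h | h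
    · nlinarith [ha.1, ha.2, Real.cos_le_one θ]
    · nlinarith [ha.1, ha.2]
  have hpos : 0 < 1 + a * Real.cos θ := lt_of_lt_of_le (by positivity) hlb
  have hl1 : Real.log (1 + a * Real.cos θ) ≤ Real.log 2 := Real.log_le_log hpos hub
  have hl2 : Real.log (((π - |θ|)/π)^2) ≤ Real.log (1 + a * Real.cos θ) :=
    Real.log_le_log (by positivity) hlb
  have hexp : Real.log (((π - |θ|)/π)^2) = 2*Real.log (π - |θ|) - 2*Real.log π := by
    rw [Real.log_pow, Real.log_div hm.ne' hpi0.ne']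
    push_cast
    ring
  have hlog2 : 0 ≤ Real.log 2 := Real.log_nonneg one_le_two
  have hlogpi : 0 ≤ Real.log π := Real.log_nonneg (by linarith)
  rw [abs_le]
  constructor
  · rw [hexp] at hl2
    nlinarith [neg_abs_le (Real.log (π - |θ|)), abs_nonneg (Real.log (π - |θ|))]
  · nlinarith [abs_nonneg (Real.log (π - |θ|))]

lemma g_ii : IntervalIntegrable
    (fun θ : ℝ => 2*Real.log 2 + 2*Real.log π + 2*|Real.log (π - |θ|)|) volume (-π) π :=
  intervalIntegrable_const.add ((log_dist_ii.abs).const_mul 2)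

lemma ae_ne_pi' : ∀ᵐ θ : ℝ ∂(volume : Measure ℝ), θ ≠ π := by
  rw [MeasureTheory.ae_iff]
  have : {θ : ℝ | ¬ θ ≠ π} = {π} := by ext x; simp
  rw [this]
  exact Real.volume_singleton

lemma mem_Ioo_of_uIoc {θ : ℝ} (h1 : θ ∈ Set.uIoc (-π) π) (h2 : θ ≠ π) :
    θ ∈ Set.Ioo (-π) π := by
  rw [Set.uIoc_of_le (by linarith [Real.pi_pos] : -π ≤ π)] at h1
  exact ⟨h1.1, lt_of_le_of_ne h1.2 h2⟩

lemma main_one : ∫ θ in (-π)..π, Real.log (1 + Real.cos θ) = 2*π*Real.log (1/2) := by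
  have hpi := Real.pi_pos
  set a : ℕ → ℝ := fun n => 1 - 1/(n+1) with ha_def
  have ha_mem : ∀ n : ℕ, a n ∈ Set.Icc (0:ℝ) 1 := by
    intro n
    have h1 : (0:ℝ) < (n:ℝ) + 1 := by positivity
    constructor
    · have : 1/((n:ℝ)+1) ≤ 1 := by rw [div_le_one h1]; linarith
      simp only [ha_def]; linarith
    · have : 0 < 1/((n:ℝ)+1) := by positivity
      simp only [ha_def]; linarith
  have ha_lt : ∀ n : ℕ, |a n| < 1 := by
    intro n
    have h1 : (0:ℝ) < (n:ℝ) + 1 := by positivity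
    have h2 : 0 < 1/((n:ℝ)+1) := by positivity
    have h3 : 1/((n:ℝ)+1) ≤ 1 := by rw [div_le_one h1]; linarith
    rw [abs_lt]; constructor <;> simp only [ha_def] <;> linarith
  have ha_tend : Filter.Tendsto a Filter.atTop (nhds 1) := by
    have h := tendsto_one_div_add_atTop_nhds_zero_nat (𝕜 := ℝ)
    have := Filter.Tendsto.const_sub (1:ℝ) h
    simpa [ha_def] using this
  -- dominated convergence
  have h1 : Filter.Tendsto (fun n => ∫ θ in (-π)..π, Real.log (1 + a n * Real.cos θ))
      Filter.atTop (nhds (∫ θ in (-π)..π, Real.log (1 + Real.cos θ))) := by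
    apply intervalIntegral.tendsto_integral_filter_of_dominated_convergence
      (fun θ : ℝ => 2*Real.log 2 + 2*Real.log π + 2*|Real.log (π - |θ|)|)
    · apply Filter.Eventually.of_forall
      intro n
      have hm : Measurable fun θ : ℝ => 1 + a n * Real.cos θ := by fun_prop
      exact (Real.measurable_log.comp hm).aestronglyMeasurable
    · apply Filter.Eventually.of_forall
      intro n
      filter_upwards [ae_ne_pi'] with θ hne hθ
      rw [Real.norm_eq_abs]
      exact abs_log_le (a n) θ (ha_mem n) (mem_Ioo_of_uIoc hθ hne)
    · exact g_ii
    · filter_upwards [ae_ne_pi'] with θ hne hθ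
      have hIoo := mem_Ioo_of_uIoc hθ hne
      have hm : 0 < π - |θ| := by
        have := abs_lt.2 ⟨hIoo.1, hIoo.2⟩; linarith
      have hpos : 0 < 1 + Real.cos θ := by
        have := low_bound θ (by linarith : |θ| ≤ π)
        have hq : 0 < ((π - |θ|)/π)^2 := by positivity
        linarith
      have harg : Filter.Tendsto (fun n => 1 + a n * Real.cos θ) Filter.atTop
          (nhds (1 + Real.cos θ)) := by
        have h := (ha_tend.mul_const (Real.cos θ)).const_add 1
        rw [one_mul] at h
        exact h
      exact ((Real.continuousAt_log hpos.ne').tendsto).comp harg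
  -- explicit values
  have h2 : ∀ n, (∫ θ in (-π)..π, Real.log (1 + a n * Real.cos θ))
      = 2*π*Real.log ((1 + Real.sqrt (1 - (a n)^2))/2) := fun n => main_lt (a n) (ha_lt n)
  have hca : Filter.Tendsto (fun n => 2*π*Real.log ((1 + Real.sqrt (1 - (a n)^2))/2))
      Filter.atTop (nhds (2*π*Real.log (1/2))) := by
    have hinner : Continuous (fun x : ℝ => (1 + Real.sqrt (1 - x^2))/2) := by fun_prop
    have hlogc : ContinuousAt Real.log ((1 + Real.sqrt (1 - (1:ℝ)^2))/2) := by
      apply Real.continuousAt_log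
      norm_num
    have hval : ((1 + Real.sqrt (1 - (1:ℝ)^2))/2) = 1/2 := by norm_num
    have := (Filter.Tendsto.comp (hlogc.tendsto)
      ((hinner.continuousAt).tendsto.comp ha_tend)).const_mul (2*π)
    rw [hval] at this
    convert this using 2
    rfl
  exact tendsto_nhds_unique h1 (by simpa only [← h2] using hca)

lemma symm_int (α : ℝ) : ∫ θ in (-π)..π, Real.log (1 + -α * Real.cos θ)
    = ∫ θ in (-π)..π, Real.log (1 + α * Real.cos θ) := by
  have hper : Function.Periodic (fun θ => Real.log (1 + α * Real.cos θ)) (2*π) := by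
    have := Real.cos_periodic.comp (fun x => Real.log (1 + α * x))
    simpa [Function.comp] using this
  calc ∫ θ in (-π)..π, Real.log (1 + -α * Real.cos θ)
      = ∫ θ in (-π)..π, (fun y => Real.log (1 + α * Real.cos y)) (π - θ) := by
        apply intervalIntegral.integral_congr
        intro θ _
        simp only [Real.cos_pi_sub]
        ring_nf
    _ = ∫ y in (π - π)..(π - -π), Real.log (1 + α * Real.cos y) :=
        intervalIntegral.integral_comp_sub_left (fun y => Real.log (1 + α * Real.cos y)) π
    _ = ∫ y in (0:ℝ)..(2*π), Real.log (1 + α * Real.cos y) := by norm_num; ring_nf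
    _ = ∫ θ in (-π)..π, Real.log (1 + α * Real.cos θ) := by
        have h := hper.intervalIntegral_add_eq (-π) 0
        rw [show -π + 2*π = π by ring, zero_add] at h
        rw [h]

theorem stmt14 (α : ℝ) (hα : α ∈ Set.Icc (-1 : ℝ) 1) :
    (1 / (2 * π)) * ∫ θ in (-π)..π, Real.log (1 + α * Real.cos θ) =
      Real.log ((1 + Real.sqrt (1 - α ^ 2)) / 2) := by
  have hpi := Real.pi_pos
  rcases lt_or_ge |α| 1 with h | h
  · rw [main_lt α h]
    field_simp
  · have h1 : |α| = 1 := le_antisymm (abs_le.mpr ⟨hα.1, hα.2⟩) h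
    rcases abs_eq (by norm_num : (0:ℝ) ≤ 1) |>.mp h1 with h2 | h2
    · subst h2
      simp only [one_mul, main_one]
      rw [show (1:ℝ) - 1^2 = 0 by norm_num, Real.sqrt_zero]
      have hne : (2*π : ℝ) ≠ 0 := by positivity
      field_simp
      norm_num
    · subst h2
      have hsym := symm_int 1
      simp only [one_mul] at hsym
      have harg : ∀ θ:ℝ, (1 : ℝ) + -1 * Real.cos θ = 1 + -(1:ℝ) * Real.cos θ := fun _ => rfl
      rw [show (∫ θ in (-π)..π, Real.log (1 + (-1:ℝ) * Real.cos θ))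
        = ∫ θ in (-π)..π, Real.log (1 + Real.cos θ) from hsym, main_one]
      rw [show (1:ℝ) - (-1)^2 = 0 by norm_num, Real.sqrt_zero]
      field_simp
      norm_num
end
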